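/- arXiv:2405.12973 — 5 statements merged into one kernel-verified Lean document; each statement's English description precedes it below -/
import Mathlib

section
/- Let K ⊆ ℝ^n be a proper convex cone and let q(x) = xᵀQx be a quadratic form whose real symmetric matrix Q has exactly one positive eigenvalue (counted with multiplicity). Then q is K-Lorentzian if and only if Qx ∈ K* for every x ∈ K, i.e. Q(K) ⊆ K*. -/
open Matrix

/-- The number of positive eigenvalues (with multiplicity) of a real symmetric matrix. -/
noncomputable def posEigCount {n : ℕ} (Q : Matrix (Fin n) (Fin n) ℝ) : ℕ :=
  @dite _ Q.IsHermitian (Classical.dec _)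
    (fun h => (Finset.univ.filter fun i => 0 < h.eigenvalues i).card)
    (fun _ => 0)

/-- A proper convex cone: a closed convex cone that is pointed and solid. -/
def IsProperCone {n : ℕ} (K : Set (Fin n → ℝ)) : Prop :=
  Convex ℝ K ∧ (∀ c : ℝ, 0 ≤ c → ∀ x ∈ K, c • x ∈ K) ∧
    IsClosed K ∧ K ∩ (-K) = {0} ∧ (interior K).Nonempty

/-- The dual cone of `K` with respect to the standard inner product. -/
def dualConeSet {n : ℕ} (K : Set (Fin n → ℝ)) : Set (Fin n → ℝ) :=
  {y | ∀ x ∈ K, 0 ≤ y ⬝ᵥ x}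

/-- The quadratic form with symmetric matrix `Q` is `K`-Lorentzian: `Q` has exactly one
positive eigenvalue and `yᵀQx > 0` for all `x, y` in the interior of `K`. -/
def IsLorentzianMatrix {n : ℕ} (K : Set (Fin n → ℝ)) (Q : Matrix (Fin n) (Fin n) ℝ) : Prop :=
  posEigCount Q = 1 ∧ ∀ x ∈ interior K, ∀ y ∈ interior K, 0 < y ⬝ᵥ (Q *ᵥ x)

/-- A nonzero `v ∈ K` spans an extreme ray of `K`. -/
def SpansExtremeRay {n : ℕ} (K : Set (Fin n → ℝ)) (v : Fin n → ℝ) : Prop :=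
  v ∈ K ∧ v ≠ 0 ∧ ∀ x ∈ K, ∀ y ∈ K, v = x + y →
    (∃ c : ℝ, 0 ≤ c ∧ x = c • v) ∧ (∃ c : ℝ, 0 ≤ c ∧ y = c • v)

/-- If an affine function is nonnegative on `(0,1]` then its value at `0` is nonnegative. -/
lemma aux_nonneg {A B : ℝ} (h : ∀ t : ℝ, 0 < t → t ≤ 1 → 0 ≤ t * A + (1 - t) * B) :
    0 ≤ B := by
  by_contra hB
  push_neg at hB
  rcases le_or_gt (A - B) 0 with hAB | hAB
  · have h1 := h 1 one_pos le_rfl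
    nlinarith
  · have ht0 : 0 < (-B) / (2 * (A - B)) := div_pos (by linarith) (by linarith)
    set t := min 1 ((-B) / (2 * (A - B))) with htdef
    have h1 : 0 < t := lt_min one_pos ht0
    have h2 : t ≤ 1 := min_le_left _ _
    have h3 : t ≤ (-B) / (2 * (A - B)) := min_le_right _ _
    have e1 := h t h1 h2
    have e2 : t * A + (1 - t) * B = B + t * (A - B) := by ring
    have e3 : t * (A - B) ≤ ((-B) / (2 * (A - B))) * (A - B) :=
      mul_le_mul_of_nonneg_right h3 hAB.le
    have e4 : ((-B) / (2 * (A - B))) * (A - B) = -B / 2 := by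
      field_simp
    linarith

/-- A vector pairing nonnegatively with a set and nonpositively with an interior point is zero. -/
lemma dual_vanish {n : ℕ} {K : Set (Fin n → ℝ)} {x u : Fin n → ℝ}
    (hx : x ∈ interior K) (hu : ∀ z ∈ K, 0 ≤ u ⬝ᵥ z) (hux : u ⬝ᵥ x ≤ 0) : u = 0 := by
  obtain ⟨ε, hε, hball⟩ := Metric.isOpen_iff.1 isOpen_interior x hx
  have hx0 : u ⬝ᵥ x = 0 := le_antisymm hux (hu x (interior_subset hx))
  set t : ℝ := ε / (2 * (‖u‖ + 1)) with ht
  have ht0 : 0 < t := by positivity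
  have hz : x - t • u ∈ K := by
    apply interior_subset; apply hball
    have : dist (x - t • u) x = t * ‖u‖ := by
      rw [dist_eq_norm]
      simp [norm_smul, abs_of_pos ht0]
    rw [Metric.mem_ball, this]
    have : t * ‖u‖ < t * (‖u‖ + 1) := by nlinarith
    have h2 : t * (‖u‖ + 1) = ε / 2 := by rw [ht]; field_simp
    linarith
  have := hu _ hz
  have hexp : u ⬝ᵥ (x - t • u) = -(t * (u ⬝ᵥ u)) := by
    rw [dotProduct_sub, hx0, dotProduct_smul]
    simp [smul_eq_mul]
  rw [hexp] at this
  have huu : u ⬝ᵥ u ≤ 0 := by nlinarith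
  have : u ⬝ᵥ u = 0 :=
    le_antisymm huu (by have := dotProduct_self_star_nonneg u; simpa using this)
  exact (dotProduct_self_eq_zero).1 this

lemma quad_symm {n : ℕ} {Q : Matrix (Fin n) (Fin n) ℝ} (hQ : Q.IsHermitian)
    (a b : Fin n → ℝ) : a ⬝ᵥ (Q *ᵥ b) = b ⬝ᵥ (Q *ᵥ a) := by
  have hT : Qᵀ = Q := by
    ext i j
    have := congrFun (congrFun hQ.eq i) j
    simpa [conjTranspose_apply] using this
  rw [dotProduct_mulVec, ← mulVec_transpose, hT, dotProduct_comm]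

lemma quad_eq_sum {n : ℕ} {Q : Matrix (Fin n) (Fin n) ℝ} (hQ : Q.IsHermitian)
    (v : Fin n → ℝ) :
    v ⬝ᵥ (Q *ᵥ v) =
      ∑ i, hQ.eigenvalues i * (⇑(hQ.eigenvectorBasis i) ⬝ᵥ v) ^ 2 := by
  classical
  set U : Matrix (Fin n) (Fin n) ℝ := (hQ.eigenvectorUnitary : Matrix (Fin n) (Fin n) ℝ)
    with hU
  set w : Fin n → ℝ := star U *ᵥ v with hw
  have hspec := hQ.spectral_theorem
  have hQv : Q *ᵥ v = U *ᵥ ((diagonal (RCLike.ofReal ∘ hQ.eigenvalues)) *ᵥ w) := by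
    conv_lhs => rw [hspec, Unitary.conjStarAlgAut_apply]
    rw [hw, mulVec_mulVec, mulVec_mulVec, ← hU]
  have hT : Uᵀ = star U := by
    rw [star_eq_conjTranspose]
    ext i j
    simp [conjTranspose_apply]
  rw [hQv, dotProduct_mulVec, ← mulVec_transpose, hT, ← hw]
  have hdiag : (diagonal (RCLike.ofReal ∘ hQ.eigenvalues)) *ᵥ w
      = fun i => hQ.eigenvalues i * w i := by
    ext i
    simp [mulVec_diagonal]
  have hwfun : star U *ᵥ v = fun i => ⇑(hQ.eigenvectorBasis i) ⬝ᵥ v := by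
    ext i
    simp only [mulVec, dotProduct, star_apply, hU]
    apply Finset.sum_congr rfl
    intro j _
    rw [Matrix.IsHermitian.eigenvectorUnitary_apply]
    simp
  rw [hdiag, hw, hwfun]
  simp only [dotProduct]
  apply Finset.sum_congr rfl
  intro i _
  ring

/-- Let `K ⊆ ℝⁿ` be a proper convex cone and `q(x) = xᵀQx` a quadratic form
whose real symmetric matrix `Q` has exactly one positive eigenvalue. Then `q` is
`K`-Lorentzian if and only if `Q(K) ⊆ K*`. -/
theorem stmt0 {n : ℕ} (K : Set (Fin n → ℝ)) (hK : IsProperCone K)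
    (Q : Matrix (Fin n) (Fin n) ℝ) (hsymm : Q.IsHermitian) (heig : posEigCount Q = 1) :
    IsLorentzianMatrix K Q ↔ ∀ x ∈ K, Q *ᵥ x ∈ dualConeSet K := by
  obtain ⟨hconv, hscale, hclosed, hpointed, ⟨e, he⟩⟩ := hK
  constructor
  · rintro ⟨-, hpos2⟩ x hx z hz
    have step1 : ∀ x ∈ K, ∀ y ∈ interior K, 0 ≤ y ⬝ᵥ Q *ᵥ x := by
      intro x hx y hy
      apply aux_nonneg (A := y ⬝ᵥ (Q *ᵥ e))
      intro t ht0 ht1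
      have hmem : t • e + (1 - t) • x ∈ interior K :=
        hconv.combo_interior_self_mem_interior he hx ht0 (by linarith) (by ring)
      have hval := (hpos2 _ hmem y hy).le
      have hexp : y ⬝ᵥ Q *ᵥ (t • e + (1 - t) • x)
          = t * (y ⬝ᵥ Q *ᵥ e) + (1 - t) * (y ⬝ᵥ Q *ᵥ x) := by
        simp [mulVec_add, mulVec_smul, dotProduct_add, dotProduct_smul, smul_eq_mul]
      linarith [hexp ▸ hval]
    rw [dotProduct_comm]
    apply aux_nonneg (A := e ⬝ᵥ (Q *ᵥ x))
    intro t ht0 ht1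
    have hmem : t • e + (1 - t) • z ∈ interior K :=
      hconv.combo_interior_self_mem_interior he hz ht0 (by linarith) (by ring)
    have hval := step1 x hx _ hmem
    have hexp : (t • e + (1 - t) • z) ⬝ᵥ Q *ᵥ x
        = t * (e ⬝ᵥ Q *ᵥ x) + (1 - t) * (z ⬝ᵥ Q *ᵥ x) := by
      simp [add_dotProduct, smul_dotProduct, smul_eq_mul]
    linarith [hexp ▸ hval]
  · intro hdual
    refine ⟨heig, ?_⟩
    classical
    have hcard : (Finset.univ.filter fun i => 0 < hsymm.eigenvalues i).card = 1 := by
      rw [posEigCount, dif_pos hsymm] at heig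
      exact heig
    obtain ⟨i₀, hi₀⟩ := Finset.card_eq_one.mp hcard
    have hpos : 0 < hsymm.eigenvalues i₀ := by
      have hmem : i₀ ∈ Finset.univ.filter fun i => 0 < hsymm.eigenvalues i := by
        rw [hi₀]; exact Finset.mem_singleton_self i₀
      exact (Finset.mem_filter.mp hmem).2
    have hneg : ∀ j, j ≠ i₀ → hsymm.eigenvalues j ≤ 0 := by
      intro j hj
      by_contra hcon
      push_neg at hcon
      have hmem : j ∈ Finset.univ.filter fun i => 0 < hsymm.eigenvalues i :=
        Finset.mem_filter.mpr ⟨Finset.mem_univ j, hcon⟩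
      rw [hi₀] at hmem
      exact hj (Finset.mem_singleton.mp hmem)
    set u : Fin n → ℝ := ⇑(hsymm.eigenvectorBasis i₀) with hudef
    have hu : Q *ᵥ u = hsymm.eigenvalues i₀ • u := hsymm.mulVec_eigenvectorBasis i₀
    have hu0 : u ≠ 0 := by
      intro h
      exact hsymm.eigenvectorBasis.orthonormal.ne_zero i₀ (by rw [hudef] at h; simpa using h)
    have hquadnonpos : ∀ v : Fin n → ℝ, u ⬝ᵥ v = 0 → v ⬝ᵥ Q *ᵥ v ≤ 0 := by
      intro v hv
      rw [quad_eq_sum hsymm v]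
      apply Finset.sum_nonpos
      intro i _
      by_cases hi : i = i₀
      · subst hi
        rw [← hudef, hv]
        simp
      · exact mul_nonpos_of_nonpos_of_nonneg (hneg i hi) (sq_nonneg _)
    have hstep1 : ∀ x ∈ interior K, 0 < x ⬝ᵥ Q *ᵥ x := by
      intro x hx
      have hxK := interior_subset hx
      rcases (hdual x hxK x hxK).lt_or_eq with h | h
      · rwa [dotProduct_comm] at h
      · exfalso
        have hQx0 : Q *ᵥ x = 0 :=
          dual_vanish hx (fun z hz => hdual x hxK z hz) (le_of_eq h.symm)
        obtain ⟨ε, hε, hball⟩ := Metric.isOpen_iff.1 isOpen_interior x hx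
        set t : ℝ := ε / (2 * (‖u‖ + 1)) with htdef
        have ht0 : 0 < t := by positivity
        have hmem : ∀ s : ℝ, |s| ≤ t → x + s • u ∈ K := by
          intro s hs
          refine interior_subset (hball ?_)
          rw [Metric.mem_ball, dist_eq_norm]
          have h1 : x + s • u - x = s • u := by abel
          rw [h1, norm_smul]
          have h2 : |s| * ‖u‖ ≤ t * ‖u‖ := mul_le_mul_of_nonneg_right hs (norm_nonneg u)
          have h3 : t * ‖u‖ < t * (‖u‖ + 1) := by nlinarith
          have h4 : t * (‖u‖ + 1) = ε / 2 := by rw [htdef]; field_simp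
          calc |s| * ‖u‖ ≤ t * ‖u‖ := h2
            _ < t * (‖u‖ + 1) := h3
            _ = ε / 2 := h4
            _ < ε := by linarith
        have hkey : ∀ s : ℝ, |s| ≤ t → ∀ z ∈ K, 0 ≤ (s * hsymm.eigenvalues i₀) * (u ⬝ᵥ z) := by
          intro s hs z hz
          have h1 := hdual _ (hmem s hs) z hz
          have h2 : Q *ᵥ (x + s • u) = (s * hsymm.eigenvalues i₀) • u := by
            rw [mulVec_add, hQx0, mulVec_smul, hu, zero_add, smul_smul]
          rw [h2, smul_dotProduct, smul_eq_mul] at h1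
          exact h1
        have htabs : |t| ≤ t := by rw [abs_of_pos ht0]
        have hntabs : |(-t)| ≤ t := by rw [abs_neg, abs_of_pos ht0]
        have hposmul : 0 < t * hsymm.eigenvalues i₀ := mul_pos ht0 hpos
        have hpos' : ∀ z ∈ K, 0 ≤ u ⬝ᵥ z := by
          intro z hz
          have h1 := hkey t htabs z hz
          by_contra hcon
          push_neg at hcon
          exact absurd h1 (not_le.2 (mul_neg_of_pos_of_neg hposmul hcon))
        have hneg' : u ⬝ᵥ x ≤ 0 := by
          have h1 := hkey (-t) hntabs x hxK
          by_contra hcon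
          push_neg at hcon
          have : (-t * hsymm.eigenvalues i₀) * (u ⬝ᵥ x) < 0 :=
            mul_neg_of_neg_of_pos (by nlinarith) hcon
          linarith
        exact hu0 (dual_vanish hx hpos' hneg')
    intro x hx y hy
    have hge : 0 ≤ y ⬝ᵥ Q *ᵥ x := by
      have := hdual x (interior_subset hx) y (interior_subset hy)
      rwa [dotProduct_comm] at this
    rcases hge.lt_or_eq with h | h
    · exact h
    · exfalso
      have hyx : y ⬝ᵥ Q *ᵥ x = 0 := h.symm
      have hxy : x ⬝ᵥ Q *ᵥ y = 0 := by rw [quad_symm hsymm]; exact hyx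
      have hxx := hstep1 x hx
      have hyy := hstep1 y hy
      set c : ℝ := u ⬝ᵥ x with hc
      set d : ℝ := u ⬝ᵥ y with hd
      by_cases hc0 : c = 0
      · have := hquadnonpos x hc0
        linarith
      · set v : Fin n → ℝ := d • x + (-c) • y with hv
        have huv : u ⬝ᵥ v = 0 := by
          rw [hv, dotProduct_add, dotProduct_smul, dotProduct_smul, ← hc, ← hd]
          simp [smul_eq_mul]
          ring
        have hvq : v ⬝ᵥ Q *ᵥ v = d ^ 2 * (x ⬝ᵥ Q *ᵥ x) + c ^ 2 * (y ⬝ᵥ Q *ᵥ y) := by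
          rw [hv]
          simp only [mulVec_add, mulVec_smul, dotProduct_add, add_dotProduct,
            dotProduct_smul, smul_dotProduct, smul_eq_mul]
          rw [show y ⬝ᵥ Q *ᵥ x = 0 from hyx, show x ⬝ᵥ Q *ᵥ y = 0 from hxy]
          ring
        have hle := hquadnonpos v huv
        rw [hvq] at hle
        nlinarith [sq_nonneg d, mul_pos (mul_self_pos.mpr hc0) hyy, sq_nonneg c]
end

section
/- Let K ⊆ ℝ^n be a proper convex cone and let q(x) = xᵀQx be a quadratic form whose real symmetric matrix Q has exactly one positive eigenvalue (counted with multiplicity). Then q is K-Lorentzian if and only if yᵀQx ≥ 0 for all vectors x and y spanning extreme rays of K. -/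
open Matrix

lemma tiny {b c ε : ℝ} (hε : 0 < ε) (h : ∀ t : ℝ, 0 < t → t ≤ ε → 0 ≤ b + t * c) : 0 ≤ b := by
  by_contra hb
  push_neg at hb
  have hc : (0:ℝ) < 2 * (|c| + 1) := by positivity
  set t := min ε (-b / (2 * (|c| + 1))) with ht
  have ht0 : 0 < t := lt_min hε (div_pos (by linarith) hc)
  have h1 := h t ht0 (min_le_left _ _)
  have h2 : t ≤ -b / (2 * (|c| + 1)) := min_le_right _ _
  have h3 : t * (2 * (|c| + 1)) ≤ -b := by
    calc t * (2 * (|c| + 1)) ≤ (-b / (2 * (|c| + 1))) * (2 * (|c| + 1)) :=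
          mul_le_mul_of_nonneg_right h2 hc.le
      _ = -b := div_mul_cancel₀ _ (ne_of_gt hc)
  nlinarith [le_abs_self c, neg_abs_le c, ht0.le]

lemma quadA {A B C ε : ℝ} (hε : 0 < ε)
    (h : ∀ t : ℝ, 0 < t → t ≤ ε → 0 ≤ A + t * B + t ^ 2 * C) : 0 ≤ A := by
  refine tiny (b := A) (c := |B| + ε * |C|) hε fun t ht0 htε => ?_
  have := h t ht0 htε
  nlinarith [le_abs_self B, le_abs_self C, neg_abs_le B, neg_abs_le C, sq_nonneg t, ht0.le,
    mul_le_mul_of_nonneg_left htε (abs_nonneg C)]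

lemma dot_cont {n : ℕ} (c : Fin n → ℝ) : Continuous fun x : Fin n → ℝ => c ⬝ᵥ x := by
  unfold dotProduct
  exact continuous_finset_sum _ fun i _ => (continuous_const.mul (continuous_apply i))

lemma Bsym {n : ℕ} {Q : Matrix (Fin n) (Fin n) ℝ} (hsymm : Q.IsHermitian)
    (x y : Fin n → ℝ) : y ⬝ᵥ (Q *ᵥ x) = x ⬝ᵥ (Q *ᵥ y) := by
  have hT : Qᵀ = Q := by
    have := hsymm.eq
    rw [← Matrix.conjTranspose_eq_transpose_of_trivial]; exact hsymm.eq
  rw [Matrix.dotProduct_mulVec, ← Matrix.mulVec_transpose, hT, dotProduct_comm]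


lemma compact_convexHull {n : ℕ} {s : Set (Fin n → ℝ)} (hs : IsCompact s) :
    IsCompact (convexHull ℝ s) := by
  rcases s.eq_empty_or_nonempty with rfl | ⟨z₀, hz₀⟩
  · simp only [convexHull_empty]; exact isCompact_empty
  · set m := n + 1 with hm
    set D : Set ((Fin m → ℝ) × (Fin m → Fin n → ℝ)) :=
      (stdSimplex ℝ (Fin m)) ×ˢ (Set.univ.pi fun _ => s) with hD
    have hDc : IsCompact D :=
      (isCompact_stdSimplex ℝ (Fin m)).prod (isCompact_univ_pi fun _ => hs)
    have hcont : Continuous fun p : (Fin m → ℝ) × (Fin m → Fin n → ℝ) =>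
        ∑ i, p.1 i • p.2 i := by fun_prop
    have himg : convexHull ℝ s = (fun p : (Fin m → ℝ) × (Fin m → Fin n → ℝ) =>
        ∑ i, p.1 i • p.2 i) '' D := by
      apply Set.Subset.antisymm
      · intro x hx
        obtain ⟨ι, hι, z, w, hzs, hai, hw0, hw1, hwz⟩ :=
          eq_pos_convex_span_of_mem_convexHull hx
        have hcard : Fintype.card ι ≤ m := by
          have h1 := hai.card_le_finrank_succ
          have h2 : Module.finrank ℝ (vectorSpan ℝ (Set.range z)) ≤ n := by
            have := Submodule.finrank_le (vectorSpan ℝ (Set.range z))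
            simpa using this
          omega
        set k := Fintype.card ι with hk
        set e := Fintype.equivFin ι with he
        have key : ∀ {M : Type} [AddCommMonoid M] (G : ℕ → M),
            (∀ j', k ≤ j' → G j' = 0) →
            (∑ j : Fin m, G (j : ℕ)) = ∑ i, G (e i : ℕ) := by
          intro M _ G hG0
          rw [Fin.sum_univ_eq_sum_range]
          rw [← Finset.sum_subset (Finset.range_subset_range.2 hcard)
            (fun j _ hj => hG0 j (by simpa using hj))]
          rw [← Fin.sum_univ_eq_sum_range]
          rw [← Equiv.sum_comp e (fun i => G (i : ℕ))]
        classical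
        refine ⟨⟨fun j => if h : (j : ℕ) < k then w (e.symm ⟨j, h⟩) else 0,
                 fun j => if h : (j : ℕ) < k then z (e.symm ⟨j, h⟩) else z₀⟩,
                ⟨⟨fun j => ?_, ?_⟩, fun j _ => ?_⟩, ?_⟩
        · dsimp only; split
          · exact (hw0 _).le
          · exact le_refl _
        · dsimp only
          have := key (fun j' => if h : j' < k then w (e.symm ⟨j', h⟩) else 0)
            (fun j' hj' => dif_neg (by omega))
          rw [this]
          rw [← hw1]
          refine Finset.sum_congr rfl fun i _ => ?_
          rw [dif_pos (e i).2]
          congr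
          simp
        · dsimp only; split
          · exact hzs (Set.mem_range_self _)
          · exact hz₀
        · dsimp only
          have := key (fun j' => if h : j' < k then w (e.symm ⟨j', h⟩) • z (e.symm ⟨j', h⟩) else 0)
            (fun j' hj' => dif_neg (by omega))
          have h2 : (∑ j : Fin m,
              (if h : (j : ℕ) < k then w (e.symm ⟨j, h⟩) else 0) •
              (if h : (j : ℕ) < k then z (e.symm ⟨j, h⟩) else z₀)) =
              ∑ j : Fin m, (fun j' : ℕ => if h : j' < k then
                w (e.symm ⟨j', h⟩) • z (e.symm ⟨j', h⟩) else 0) (j : ℕ) := by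
            refine Finset.sum_congr rfl fun j _ => ?_
            by_cases h : (j : ℕ) < k
            · simp only [dif_pos h]
            · simp only [dif_neg h, zero_smul]
          rw [h2, this, ← hwz]
          refine Finset.sum_congr rfl fun i _ => ?_
          rw [dif_pos (e i).2]
          congr <;> simp
      · rintro _ ⟨⟨w, z⟩, ⟨hw, hz⟩, rfl⟩
        have hzz : ∀ i ∈ Finset.univ, z i ∈ s := fun i _ => hz i trivial
        have hmass := Finset.univ.centerMass_mem_convexHull (w := w) (z := z)
          (fun i _ => hw.1 i) (by rw [hw.2]; norm_num) hzz
        rwa [Finset.centerMass, hw.2, inv_one, one_smul] at hmass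
    rw [himg]
    exact hDc.image hcont


lemma spectral_data {n : ℕ} {Q : Matrix (Fin n) (Fin n) ℝ} (hsymm : Q.IsHermitian)
    (heig : posEigCount Q = 1) :
    ∃ (lam : Fin n → ℝ) (c : (Fin n → ℝ) → (Fin n → ℝ)) (i₀ : Fin n) (u : Fin n → ℝ),
      (∀ w, w ⬝ᵥ (Q *ᵥ w) = ∑ i, lam i * (c w i) ^ 2) ∧
      0 < lam i₀ ∧ (∀ j, j ≠ i₀ → lam j ≤ 0) ∧
      (∀ (a b : ℝ) (x y : Fin n → ℝ), c (a • x + b • y) i₀ = a * c x i₀ + b * c y i₀) ∧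
      c u = Pi.single i₀ 1 := by
  have U := hsymm.eigenvectorUnitary
  set lam := hsymm.eigenvalues with hlam
  -- decode heig
  rw [posEigCount, dif_pos hsymm] at heig
  obtain ⟨i₀, hi₀⟩ := Finset.card_eq_one.mp heig
  have hmem : ∀ j : Fin n, (0 < lam j) ↔ j = i₀ := by
    intro j
    constructor
    · intro hj
      have : j ∈ Finset.univ.filter fun i => 0 < hsymm.eigenvalues i :=
        Finset.mem_filter.mpr ⟨Finset.mem_univ _, hj⟩
      rw [hi₀] at this
      simpa using this
    · intro hj
      have h2 : j ∈ ({j} : Finset (Fin n)) := Finset.mem_singleton_self j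
      rw [hj] at h2 ⊢
      rw [← hi₀] at h2
      exact (Finset.mem_filter.mp h2).2
  set Um : Matrix (Fin n) (Fin n) ℝ := (hsymm.eigenvectorUnitary : Matrix (Fin n) (Fin n) ℝ)
    with hUm
  refine ⟨lam, fun w => (star Um) *ᵥ w, i₀, ⇑(hsymm.eigenvectorBasis i₀), ?_, ?_, ?_, ?_, ?_⟩
  · intro w
    conv_lhs => rw [hsymm.spectral_theorem, Unitary.conjStarAlgAut_apply]
    rw [← Matrix.mulVec_mulVec, ← Matrix.mulVec_mulVec]
    rw [Matrix.dotProduct_mulVec w Um]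
    have hvm : w ᵥ* Um = (star Um) *ᵥ w := by
      rw [Matrix.star_eq_conjTranspose, Matrix.conjTranspose_eq_transpose_of_trivial,
        Matrix.mulVec_transpose]
    rw [hvm]
    rw [dotProduct, Finset.sum_congr rfl]
    intro i _
    rw [Matrix.mulVec_diagonal]
    dsimp [Function.comp]
    ring
  · exact (hmem i₀).mpr rfl
  · intro j hj
    by_contra h
    push_neg at h
    exact hj ((hmem j).mp h)
  · intro a b x y
    dsimp only
    rw [Matrix.mulVec_add, Matrix.mulVec_smul, Matrix.mulVec_smul]
    simp
  · exact hsymm.star_eigenvectorUnitary_mulVec i₀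

lemma cone_nonneg {n : ℕ} {K : Set (Fin n → ℝ)} (hK : IsProperCone K)
    {Q : Matrix (Fin n) (Fin n) ℝ}
    (hext : ∀ x y : Fin n → ℝ, SpansExtremeRay K x → SpansExtremeRay K y →
      0 ≤ y ⬝ᵥ (Q *ᵥ x)) :
    ∀ x ∈ K, ∀ y ∈ K, 0 ≤ y ⬝ᵥ (Q *ᵥ x) := by
  classical
  obtain ⟨hconv, hsmul, hclosed, hpointed, hint⟩ := hK
  have hzero : (0 : Fin n → ℝ) ∈ K := by
    have : (0 : Fin n → ℝ) ∈ ({0} : Set (Fin n → ℝ)) := rfl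
    rw [← hpointed] at this
    exact this.1
  have hpt : ∀ v : Fin n → ℝ, v ∈ K → -v ∈ K → v = 0 := by
    intro v hv hnv
    have : v ∈ K ∩ (-K) := ⟨hv, by simpa using hnv⟩
    rw [hpointed] at this
    exact this
  -- the compact "cross-section" of K
  set S : Set (Fin n → ℝ) := K ∩ Metric.sphere 0 1 with hS
  have hScomp : IsCompact S := (isCompact_sphere 0 1).inter_left hclosed
  have hCcomp : IsCompact (convexHull ℝ S) := compact_convexHull hScomp
  have h0C : (0 : Fin n → ℝ) ∉ convexHull ℝ S := by
    intro h0
    obtain ⟨ι, hι, z, w, hzs, _, hw0, hw1, hwz⟩ := eq_pos_convex_span_of_mem_convexHull h0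
    have hne : Nonempty ι := by
      by_contra h
      rw [not_nonempty_iff] at h
      rw [Finset.sum_of_isEmpty] at hw1
      norm_num at hw1
    obtain ⟨i⟩ := hne
    have hsum_mem : ∀ (t : Finset ι), (∑ j ∈ t, w j • z j) ∈ K := by
      intro t
      refine Finset.sum_induction _ (· ∈ K) (fun a b ha hb => ?_) hzero fun j _ => ?_
      · have h2 : (2:ℝ) • ((1/2 : ℝ) • a + (1/2 : ℝ) • b) ∈ K := by
          refine hsmul 2 (by norm_num) _ ?_
          exact hconv ha hb (by norm_num) (by norm_num) (by norm_num)
        have : (2:ℝ) • ((1/2 : ℝ) • a + (1/2 : ℝ) • b) = a + b := by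
          rw [smul_add, smul_smul, smul_smul]
          norm_num
        rwa [this] at h2
      · exact hsmul _ (hw0 j).le _ (hzs (Set.mem_range_self j)).1
    have key : w i • z i = - ∑ j ∈ Finset.univ.erase i, w j • z j := by
      have h5 := hwz
      rw [← Finset.add_sum_erase _ _ (Finset.mem_univ i)] at h5
      exact eq_neg_of_add_eq_zero_left h5
    have h1 : w i • z i ∈ K := hsmul _ (hw0 i).le _ (hzs (Set.mem_range_self i)).1
    have h2 : -(w i • z i) ∈ K := by
      rw [key, neg_neg]
      exact hsum_mem _
    have h3 := hpt _ h1 h2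
    have hz0 : z i = 0 := by
      have := smul_eq_zero.mp h3
      rcases this with h | h
      · exact absurd h (ne_of_gt (hw0 i))
      · exact h
    have : ‖z i‖ = 1 := by
      have := (hzs (Set.mem_range_self i)).2
      simpa using this
    rw [hz0] at this
    norm_num at this
  -- separating functional
  obtain ⟨f, u, hfu, hfC⟩ :=
    geometric_hahn_banach_point_closed (convex_convexHull ℝ S) hCcomp.isClosed h0C
  rw [map_zero] at hfu
  have hfpos : ∀ x ∈ K, x ≠ 0 → 0 < f x := by
    intro x hx hx0
    have hnx : ‖x‖ ≠ 0 := norm_ne_zero_iff.mpr hx0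
    have hxS : ‖x‖⁻¹ • x ∈ S := by
      constructor
      · exact hsmul _ (by positivity) _ hx
      · simp [norm_smul, inv_mul_cancel₀ hnx]
    have := hfC _ (subset_convexHull ℝ S hxS)
    rw [_root_.map_smul, smul_eq_mul] at this
    have h4 : 0 < ‖x‖⁻¹ * f x := lt_trans hfu this
    nlinarith [norm_nonneg x, inv_nonneg.mpr (norm_nonneg x)]
  have hflb : ∀ x ∈ K, u * ‖x‖ ≤ f x := by
    intro x hx
    rcases eq_or_ne x 0 with rfl | hx0
    · simp
    · have hnx : ‖x‖ ≠ 0 := norm_ne_zero_iff.mpr hx0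
      have hxS : ‖x‖⁻¹ • x ∈ S := by
        constructor
        · exact hsmul _ (by positivity) _ hx
        · simp [norm_smul, inv_mul_cancel₀ hnx]
      have h6 := hfC _ (subset_convexHull ℝ S hxS)
      rw [_root_.map_smul, smul_eq_mul] at h6
      have hnx' : (0:ℝ) < ‖x‖ := lt_of_le_of_ne (norm_nonneg x) (Ne.symm hnx)
      calc u * ‖x‖ ≤ (‖x‖⁻¹ * f x) * ‖x‖ := by nlinarith
        _ = f x := by field_simp
  -- the compact convex base of the cone
  set Bd : Set (Fin n → ℝ) := K ∩ {x | f x = 1} with hBd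
  have hBdclosed : IsClosed Bd :=
    hclosed.inter (isClosed_eq f.continuous continuous_const)
  have hBdsub : Bd ⊆ Metric.closedBall 0 u⁻¹ := by
    intro x hx
    rw [Metric.mem_closedBall, dist_zero_right]
    have h7 := hflb x hx.1
    rw [hx.2] at h7
    calc ‖x‖ = u⁻¹ * (u * ‖x‖) := by field_simp
      _ ≤ u⁻¹ * 1 := mul_le_mul_of_nonneg_left h7 (inv_nonneg.mpr hfu.le)
      _ = u⁻¹ := mul_one _
  have hBdcomp : IsCompact Bd :=
    (isCompact_closedBall 0 u⁻¹).of_isClosed_subset hBdclosed hBdsub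
  have hBdconv : Convex ℝ Bd :=
    hconv.inter (convex_hyperplane (f.toLinearMap.isLinear) 1)
  have hKM := closure_convexHull_extremePoints hBdcomp hBdconv
  -- extreme points of the base span extreme rays of K
  have hray : ∀ v ∈ Bd.extremePoints ℝ, SpansExtremeRay K v := by
    intro v hv
    obtain ⟨⟨hvK, hvf⟩, hvext⟩ := mem_extremePoints.mp hv
    have hvf1 : f v = 1 := hvf
    have hv0 : v ≠ 0 := by
      intro h
      rw [h, map_zero] at hvf1
      norm_num at hvf1
    refine ⟨hvK, hv0, fun x hx y hy hxy => ?_⟩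
    rcases eq_or_ne x 0 with rfl | hx0
    · constructor
      · exact ⟨0, le_refl 0, by simp⟩
      · exact ⟨1, zero_le_one, by rw [one_smul]; simpa using hxy.symm⟩
    rcases eq_or_ne y 0 with rfl | hy0
    · constructor
      · exact ⟨1, zero_le_one, by rw [one_smul]; simpa using hxy.symm⟩
      · exact ⟨0, le_refl 0, by simp⟩
    have hfx : 0 < f x := hfpos x hx hx0
    have hfy : 0 < f y := hfpos y hy hy0
    have hab : f x + f y = 1 := by
      rw [← map_add, ← hxy, hvf1]
    have hx' : (f x)⁻¹ • x ∈ Bd := by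
      refine ⟨hsmul _ (by positivity) _ hx, ?_⟩
      simp only [Set.mem_setOf_eq, _root_.map_smul, smul_eq_mul]
      field_simp
    have hy' : (f y)⁻¹ • y ∈ Bd := by
      refine ⟨hsmul _ (by positivity) _ hy, ?_⟩
      simp only [Set.mem_setOf_eq, _root_.map_smul, smul_eq_mul]
      field_simp
    have hseg : v ∈ openSegment ℝ ((f x)⁻¹ • x) ((f y)⁻¹ • y) := by
      refine ⟨f x, f y, hfx, hfy, hab, ?_⟩
      rw [smul_inv_smul₀ (ne_of_gt hfx), smul_inv_smul₀ (ne_of_gt hfy)]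
      exact hxy.symm
    obtain ⟨hxv, hyv⟩ := hvext _ hx' _ hy' hseg
    constructor
    · refine ⟨f x, hfx.le, ?_⟩
      rw [← hxv, smul_inv_smul₀ (ne_of_gt hfx)]
    · refine ⟨f y, hfy.le, ?_⟩
      rw [← hyv, smul_inv_smul₀ (ne_of_gt hfy)]
  -- nonnegativity on the base
  have hBdnonneg : ∀ x ∈ Bd, ∀ y ∈ Bd, 0 ≤ y ⬝ᵥ (Q *ᵥ x) := by
    have step1 : ∀ y ∈ Bd.extremePoints ℝ, ∀ x ∈ Bd, 0 ≤ y ⬝ᵥ (Q *ᵥ x) := by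
      intro y hy
      have hTclosed : IsClosed {x : Fin n → ℝ | 0 ≤ y ⬝ᵥ (Q *ᵥ x)} := by
        have : {x : Fin n → ℝ | 0 ≤ y ⬝ᵥ (Q *ᵥ x)} =
            (fun x : Fin n → ℝ => (y ᵥ* Q) ⬝ᵥ x) ⁻¹' (Set.Ici 0) := by
          ext x
          simp [Matrix.dotProduct_mulVec]
        rw [this]
        exact IsClosed.preimage (dot_cont _) isClosed_Ici
      have hTconv : Convex ℝ {x : Fin n → ℝ | 0 ≤ y ⬝ᵥ (Q *ᵥ x)} := by
        intro x₁ hx₁ x₂ hx₂ a b ha hb hab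
        simp only [Set.mem_setOf_eq, Matrix.mulVec_add, Matrix.mulVec_smul,
          dotProduct_add, dotProduct_smul, smul_eq_mul] at *
        exact add_nonneg (mul_nonneg ha hx₁) (mul_nonneg hb hx₂)
      have hsub : Bd.extremePoints ℝ ⊆ {x : Fin n → ℝ | 0 ≤ y ⬝ᵥ (Q *ᵥ x)} :=
        fun x hx => hext x y (hray x hx) (hray y hy)
      intro x hx
      have : Bd ⊆ {x : Fin n → ℝ | 0 ≤ y ⬝ᵥ (Q *ᵥ x)} := by
        rw [← hKM]
        exact closure_minimal (convexHull_min hsub hTconv) hTclosed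
      exact this hx
    intro x hx
    have hTclosed : IsClosed {y : Fin n → ℝ | 0 ≤ y ⬝ᵥ (Q *ᵥ x)} := by
      have : {y : Fin n → ℝ | 0 ≤ y ⬝ᵥ (Q *ᵥ x)} =
          (fun y : Fin n → ℝ => (Q *ᵥ x) ⬝ᵥ y) ⁻¹' (Set.Ici 0) := by
        ext y
        simp [dotProduct_comm]
      rw [this]
      exact IsClosed.preimage (dot_cont _) isClosed_Ici
    have hTconv : Convex ℝ {y : Fin n → ℝ | 0 ≤ y ⬝ᵥ (Q *ᵥ x)} := by
      intro y₁ hy₁ y₂ hy₂ a b ha hb hab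
      simp only [Set.mem_setOf_eq, add_dotProduct, smul_dotProduct,
        smul_eq_mul] at *
      exact add_nonneg (mul_nonneg ha hy₁) (mul_nonneg hb hy₂)
    have hsub : Bd.extremePoints ℝ ⊆ {y : Fin n → ℝ | 0 ≤ y ⬝ᵥ (Q *ᵥ x)} :=
      fun y hy => step1 y hy x hx
    intro y hy
    have : Bd ⊆ {y : Fin n → ℝ | 0 ≤ y ⬝ᵥ (Q *ᵥ x)} := by
      rw [← hKM]
      exact closure_minimal (convexHull_min hsub hTconv) hTclosed
    exact this hy
  -- scale to the whole cone
  intro x hx y hy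
  rcases eq_or_ne x 0 with rfl | hx0
  · simp
  rcases eq_or_ne y 0 with rfl | hy0
  · simp
  have hfx : 0 < f x := hfpos x hx hx0
  have hfy : 0 < f y := hfpos y hy hy0
  have hx' : (f x)⁻¹ • x ∈ Bd := by
    refine ⟨hsmul _ (by positivity) _ hx, ?_⟩
    simp only [Set.mem_setOf_eq, _root_.map_smul, smul_eq_mul]
    field_simp
  have hy' : (f y)⁻¹ • y ∈ Bd := by
    refine ⟨hsmul _ (by positivity) _ hy, ?_⟩
    simp only [Set.mem_setOf_eq, _root_.map_smul, smul_eq_mul]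
    field_simp
  have h8 := hBdnonneg _ hx' _ hy'
  rw [Matrix.mulVec_smul, smul_dotProduct, dotProduct_smul,
    smul_eq_mul, smul_eq_mul] at h8
  by_contra hneg
  push_neg at hneg
  have h9 : (f y)⁻¹ * ((f x)⁻¹ * (y ⬝ᵥ (Q *ᵥ x))) < 0 :=
    mul_neg_of_pos_of_neg (inv_pos.mpr hfy) (mul_neg_of_pos_of_neg (inv_pos.mpr hfx) hneg)
  linarith



lemma expandB2 {n : ℕ} (Q : Matrix (Fin n) (Fin n) ℝ) (a b c d : Fin n → ℝ) (s t : ℝ) :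
    (a + s • b) ⬝ᵥ (Q *ᵥ (c + t • d)) =
      a ⬝ᵥ (Q *ᵥ c) + s * (b ⬝ᵥ (Q *ᵥ c)) + t * (a ⬝ᵥ (Q *ᵥ d)) +
        s * t * (b ⬝ᵥ (Q *ᵥ d)) := by
  simp only [Matrix.mulVec_add, Matrix.mulVec_smul, dotProduct_add,
    add_dotProduct, dotProduct_smul, smul_dotProduct, smul_eq_mul]
  ring

lemma expandB {n : ℕ} (Q : Matrix (Fin n) (Fin n) ℝ) (a b c d : Fin n → ℝ) (t : ℝ) :
    (a + t • b) ⬝ᵥ (Q *ᵥ (c + t • d)) =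
      a ⬝ᵥ (Q *ᵥ c) + t * (b ⬝ᵥ (Q *ᵥ c) + a ⬝ᵥ (Q *ᵥ d)) + t ^ 2 * (b ⬝ᵥ (Q *ᵥ d)) := by
  simp only [Matrix.mulVec_add, Matrix.mulVec_smul, dotProduct_add,
    add_dotProduct, dotProduct_smul, smul_dotProduct, smul_eq_mul]
  ring

lemma interior_pert {n : ℕ} {K : Set (Fin n → ℝ)} {x : Fin n → ℝ} (hx : x ∈ interior K)
    (v : Fin n → ℝ) : ∃ ε : ℝ, 0 < ε ∧ ∀ t : ℝ, |t| ≤ ε → x + t • v ∈ K := by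
  obtain ⟨δ, hδ, hball⟩ := Metric.isOpen_iff.mp isOpen_interior x hx
  refine ⟨δ / (2 * (‖v‖ + 1)), by positivity, fun t ht => ?_⟩
  have hm : x + t • v ∈ Metric.ball x δ := by
    rw [Metric.mem_ball, dist_eq_norm]
    rw [add_sub_cancel_left, norm_smul]
    have h1 : ‖v‖ < ‖v‖ + 1 := by linarith
    have h2 : 0 ≤ ‖v‖ := norm_nonneg v
    calc |t| * ‖v‖ ≤ (δ / (2 * (‖v‖ + 1))) * ‖v‖ :=
          mul_le_mul_of_nonneg_right ht h2
      _ < δ := by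
          rw [div_mul_eq_mul_div, div_lt_iff₀ (by positivity)]
          nlinarith
  exact interior_subset (hball hm)

/-- Let `K ⊆ ℝⁿ` be a proper convex cone and `q(x) = xᵀQx` a quadratic form
whose real symmetric matrix `Q` has exactly one positive eigenvalue. Then `q` is
`K`-Lorentzian if and only if `yᵀQx ≥ 0` for all `x, y` spanning extreme rays of `K`. -/
theorem stmt1 {n : ℕ} (K : Set (Fin n → ℝ)) (hK : IsProperCone K)
    (Q : Matrix (Fin n) (Fin n) ℝ) (hsymm : Q.IsHermitian) (heig : posEigCount Q = 1) :
    IsLorentzianMatrix K Q ↔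
      ∀ x y : Fin n → ℝ, SpansExtremeRay K x → SpansExtremeRay K y → 0 ≤ y ⬝ᵥ (Q *ᵥ x) := by
  constructor
  · -- forward direction
    rintro ⟨-, hpos⟩ x y hx hy
    obtain ⟨e, he⟩ := hK.2.2.2.2
    have hconv := hK.1
    have hmemK : ∀ (z : Fin n → ℝ), z ∈ K → ∀ t : ℝ, 0 < t → t ≤ 1 →
        z + t • (e - z) ∈ interior K := fun z hz t ht0 ht1 =>
      hconv.add_smul_sub_mem_interior hz he ⟨ht0, ht1⟩
    refine quadA (A := y ⬝ᵥ (Q *ᵥ x)) (B := (e - y) ⬝ᵥ (Q *ᵥ x) + y ⬝ᵥ (Q *ᵥ (e - x)))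
      (C := (e - y) ⬝ᵥ (Q *ᵥ (e - x))) (ε := 1) one_pos fun t ht0 ht1 => ?_
    have h1 := hpos _ (hmemK x hx.1 t ht0 ht1) _ (hmemK y hy.1 t ht0 ht1)
    rw [expandB] at h1
    linarith
  · -- backward direction
    intro hext
    refine ⟨heig, ?_⟩
    have hnonneg := cone_nonneg hK hext
    obtain ⟨lam, c, i₀, u, hq, hlam0, hlamneg, hclin, hcu⟩ := spectral_data hsymm heig
    have hqu : u ⬝ᵥ (Q *ᵥ u) = lam i₀ := by
      rw [hq u, hcu]
      rw [Finset.sum_eq_single i₀]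
      · simp
      · intro j _ hj
        simp [Pi.single_apply, hj]
      · simp
    -- positivity of the quadratic form on the interior
    have posdiag : ∀ x ∈ interior K, 0 < x ⬝ᵥ (Q *ᵥ x) := by
      intro x hx
      have hxK : x ∈ K := interior_subset hx
      have h0 : 0 ≤ x ⬝ᵥ (Q *ᵥ x) := hnonneg x hxK x hxK
      rcases h0.lt_or_eq with h | h
      · exact h
      exfalso
      -- cross terms vanish
      have hcross : ∀ v : Fin n → ℝ, v ⬝ᵥ (Q *ᵥ x) = 0 := by
        intro v
        obtain ⟨ε, hε, hmem⟩ := interior_pert hx v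
        have hpos' : ∀ t : ℝ, |t| ≤ ε →
            0 ≤ t * (2 * (v ⬝ᵥ (Q *ᵥ x))) + t ^ 2 * (v ⬝ᵥ (Q *ᵥ v)) := by
          intro t ht
          have h1 := hnonneg _ (hmem t ht) _ (hmem t ht)
          rw [expandB] at h1
          have hsymm' : x ⬝ᵥ (Q *ᵥ v) = v ⬝ᵥ (Q *ᵥ x) := Bsym hsymm v x
          rw [← h, hsymm'] at h1
          linarith
        have hge : 0 ≤ 2 * (v ⬝ᵥ (Q *ᵥ x)) := by
          refine tiny (c := v ⬝ᵥ (Q *ᵥ v)) hε fun t ht0 htε => ?_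
          have := hpos' t (by rw [abs_of_pos ht0]; exact htε)
          by_contra hc
          push_neg at hc
          have := mul_neg_of_pos_of_neg ht0 hc
          nlinarith
        have hle : 0 ≤ -(2 * (v ⬝ᵥ (Q *ᵥ x))) := by
          refine tiny (c := v ⬝ᵥ (Q *ᵥ v)) hε fun t ht0 htε => ?_
          have := hpos' (-t) (by rw [abs_neg, abs_of_pos ht0]; exact htε)
          by_contra hc
          push_neg at hc
          have := mul_neg_of_pos_of_neg ht0 hc
          nlinarith
        linarith
      -- perturb by u to get a negative value
      obtain ⟨ε, hε, hmem⟩ := interior_pert hx u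
      have h1 : x + ε • u ∈ K := hmem ε (by rw [abs_of_pos hε])
      have h2 : x + (-ε) • u ∈ K := hmem (-ε) (by rw [abs_neg, abs_of_pos hε])
      have h3 := hnonneg _ h1 _ h2
      rw [expandB2] at h3
      have e1 : u ⬝ᵥ (Q *ᵥ x) = 0 := hcross u
      have e2 : x ⬝ᵥ (Q *ᵥ u) = 0 := by rw [Bsym hsymm u x]; exact e1
      rw [← h, e1, e2, hqu] at h3
      nlinarith [mul_pos (mul_pos hε hε) hlam0]
    -- strict positivity of the bilinear form
    intro x hx y hy
    have hxK : x ∈ K := interior_subset hx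
    have hyK : y ∈ K := interior_subset hy
    have h0 : 0 ≤ y ⬝ᵥ (Q *ᵥ x) := hnonneg x hxK y hyK
    rcases h0.lt_or_eq with h | h
    · exact h
    exfalso
    have hxy : y ⬝ᵥ (Q *ᵥ x) = 0 := h.symm
    have hyx : x ⬝ᵥ (Q *ᵥ y) = 0 := by rw [Bsym hsymm y x]; exact hxy
    have hqx : 0 < x ⬝ᵥ (Q *ᵥ x) := posdiag x hx
    have hqy : 0 < y ⬝ᵥ (Q *ᵥ y) := posdiag y hy
    set p := c x i₀ with hp
    set r := c y i₀ with hr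
    obtain ⟨a, b, hab, habc⟩ : ∃ a b : ℝ, ¬(a = 0 ∧ b = 0) ∧ a * p + b * r = 0 := by
      by_cases hpr : p = 0
      · exact ⟨1, 0, by norm_num, by rw [hpr]; ring⟩
      · exact ⟨r, -p, fun hc => hpr (by linarith [hc.2]), by ring⟩
    have hw : (a • x + b • y) ⬝ᵥ (Q *ᵥ (a • x + b • y)) =
        a ^ 2 * (x ⬝ᵥ (Q *ᵥ x)) + b ^ 2 * (y ⬝ᵥ (Q *ᵥ y)) := by
      simp only [Matrix.mulVec_add, Matrix.mulVec_smul, dotProduct_add,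
        add_dotProduct, dotProduct_smul, smul_dotProduct, smul_eq_mul]
      rw [show y ⬝ᵥ (Q *ᵥ x) = 0 from hxy, show x ⬝ᵥ (Q *ᵥ y) = 0 from hyx]
      ring
    have hwpos : 0 < (a • x + b • y) ⬝ᵥ (Q *ᵥ (a • x + b • y)) := by
      rw [hw]
      rcases not_and_or.mp hab with ha | hb
      · have : 0 < a ^ 2 := by positivity
        nlinarith [sq_nonneg b]
      · have : 0 < b ^ 2 := by positivity
        nlinarith [sq_nonneg a]
    have hwneg : (a • x + b • y) ⬝ᵥ (Q *ᵥ (a • x + b • y)) ≤ 0 := by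
      rw [hq]
      refine Finset.sum_nonpos fun i _ => ?_
      rcases eq_or_ne i i₀ with rfl | hi
      · rw [hclin a b x y]
        rw [show a * c x i + b * c y i = 0 from habc]
        norm_num
      · exact mul_nonpos_of_nonpos_of_nonneg (hlamneg i hi) (sq_nonneg _)
    linarith
end

section
/- Let q(x) = xᵀQx be a quadratic form on ℝ^n whose real symmetric matrix Q is nonsingular and has exactly one positive eigenvalue (counted with multiplicity). Let K ⊆ ℝ^n be a proper convex cone such that the set of vectors spanning extreme rays of K is path-connected. Then q is K-Lorentzian if and only if q(v) ≥ 0 for every vector v spanning an extreme ray of K. -/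
open Matrix

open scoped RealInnerProductSpace

section AuxiliaryLemmas
variable {n : ℕ} {Q : Matrix (Fin n) (Fin n) ℝ} {e : Fin n → ℝ}

lemma bsymm (hsymm : Q.IsHermitian) (x y : Fin n → ℝ) :
    x ⬝ᵥ (Q *ᵥ y) = y ⬝ᵥ (Q *ᵥ x) := by
  have hQT : Qᵀ = Q := by
    have := hsymm; rwa [Matrix.IsHermitian, conjTranspose_eq_transpose_of_trivial] at this
  rw [Matrix.dotProduct_mulVec, ← Matrix.mulVec_transpose, hQT, dotProduct_comm]

lemma inner_eq_dot (x y : EuclideanSpace ℝ (Fin n)) : ⟪x, y⟫ = x ⬝ᵥ y := by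
  simp [PiLp.inner_apply, dotProduct, mul_comm]

lemma spectral (hsymm : Q.IsHermitian) (hns : Q.det ≠ 0) (heig : posEigCount Q = 1) :
    ∃ e : Fin n → ℝ, 0 < e ⬝ᵥ (Q *ᵥ e) ∧
      ∀ x : Fin n → ℝ, e ⬝ᵥ (Q *ᵥ x) = 0 → x ≠ 0 → x ⬝ᵥ (Q *ᵥ x) < 0 := by
  classical
  set u := hsymm.eigenvectorBasis with hu
  set μ := hsymm.eigenvalues with hμ
  have heig' : (Finset.univ.filter fun i => 0 < μ i).card = 1 := by
    unfold posEigCount at heig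
    rwa [dif_pos hsymm] at heig
  obtain ⟨i₀, hi₀⟩ := Finset.card_eq_one.1 heig'
  have hpos : 0 < μ i₀ := by
    have : i₀ ∈ Finset.univ.filter fun i => 0 < μ i := by rw [hi₀]; exact Finset.mem_singleton_self _
    exact (Finset.mem_filter.1 this).2
  have hnonzero : ∀ i, μ i ≠ 0 := by
    intro i hi
    apply hns
    rw [hsymm.det_eq_prod_eigenvalues]
    refine Finset.prod_eq_zero (Finset.mem_univ i) ?_
    rw [← hμ, hi]; norm_num
  have hneg : ∀ i, i ≠ i₀ → μ i < 0 := by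
    intro i hi
    have : i ∉ Finset.univ.filter fun j => 0 < μ j := by rw [hi₀]; simp [hi]
    have h2 : ¬ 0 < μ i := by simpa using this
    exact lt_of_le_of_ne (not_lt.1 h2) (hnonzero i)
  have hsym' := (isHermitian_iff_isSymmetric.1 hsymm)
  have hT : ∀ (y : EuclideanSpace ℝ (Fin n)) i,
      ⟪u i, (Matrix.toEuclideanLin Q) y⟫ = μ i * ⟪u i, y⟫ := by
    intro y i
    rw [← hsym' (u i) y]
    have h1 : (Matrix.toEuclideanLin Q) (u i) = μ i • u i :=
      congrArg (WithLp.toLp 2) (hsymm.mulVec_eigenvectorBasis i)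
    rw [h1, real_inner_smul_left]
  have key : ∀ x y : EuclideanSpace ℝ (Fin n),
      x ⬝ᵥ (Q *ᵥ y) = ∑ i, μ i * (⟪u i, x⟫ * ⟪u i, y⟫) := by
    intro x y
    have h0 : x ⬝ᵥ (Q *ᵥ y) = ⟪x, (Matrix.toEuclideanLin Q) y⟫ := by
      rw [inner_eq_dot]; rfl
    rw [h0, ← u.sum_inner_mul_inner x ((Matrix.toEuclideanLin Q) y)]
    refine Finset.sum_congr rfl fun i _ => ?_
    rw [hT, real_inner_comm x (u i)]; ring
  refine ⟨⇑(u i₀), ?_, ?_⟩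
  · show 0 < u i₀ ⬝ᵥ Q *ᵥ (u i₀)
    rw [key (u i₀) (u i₀)]
    have horth : ∀ i, ⟪u i, u i₀⟫ = if i = i₀ then 1 else 0 := fun i =>
      orthonormal_iff_ite.1 u.orthonormal i i₀
    rw [Finset.sum_eq_single i₀]
    · rw [horth i₀]; simp [hpos]
    · intro i _ hi; rw [horth i]; simp [hi]
    · intro h; exact absurd (Finset.mem_univ i₀) h
  · intro x hx hx0
    set X : EuclideanSpace ℝ (Fin n) := WithLp.toLp 2 x with hX
    have horth : ∀ i, ⟪u i, u i₀⟫ = if i = i₀ then 1 else 0 := fun i =>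
      orthonormal_iff_ite.1 u.orthonormal i i₀
    have hx' : u i₀ ⬝ᵥ Q *ᵥ X = 0 := hx
    have hc0 : ⟪u i₀, X⟫ = 0 := by
      have h1 := key (u i₀) X
      rw [Finset.sum_eq_single i₀] at h1
      · rw [horth i₀, if_pos rfl, one_mul, hx'] at h1
        rcases mul_eq_zero.1 h1.symm with h | h
        · exact absurd h (ne_of_gt hpos)
        · exact h
      · intro i _ hi; rw [horth i]; simp [hi]
      · intro h; exact absurd (Finset.mem_univ i₀) h
    show X ⬝ᵥ (Q *ᵥ X) < 0
    rw [key X X]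
    have hex : ∃ j, ⟪u j, X⟫ ≠ 0 := by
      by_contra hall
      push_neg at hall
      apply hx0
      have := u.sum_repr' X
      rw [Finset.sum_congr rfl (fun i _ => by rw [hall i, zero_smul])] at this
      simp at this
      exact congrArg (fun z : EuclideanSpace ℝ (Fin n) => (z : Fin n → ℝ)) this.symm
    obtain ⟨j, hj⟩ := hex
    have hji : j ≠ i₀ := by rintro rfl; exact hj hc0
    have : ∑ i, μ i * (⟪u i, X⟫ * ⟪u i, X⟫) < ∑ i : Fin n, (0:ℝ) := by
      refine Finset.sum_lt_sum (fun i _ => ?_) ⟨j, Finset.mem_univ j, ?_⟩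
      · rcases eq_or_ne i i₀ with rfl | hi
        · rw [hc0]; simp
        · have := hneg i hi
          have h2 : 0 ≤ ⟪u i, X⟫ * ⟪u i, X⟫ := mul_self_nonneg _
          exact mul_nonpos_of_nonpos_of_nonneg this.le h2
      · exact mul_neg_of_neg_of_pos (hneg j hji) (mul_self_pos.2 hj)
    simpa using this

lemma negsemi (hneg : ∀ x : Fin n → ℝ, e ⬝ᵥ (Q *ᵥ x) = 0 → x ≠ 0 → x ⬝ᵥ (Q *ᵥ x) < 0)
    (x : Fin n → ℝ) (hx : e ⬝ᵥ (Q *ᵥ x) = 0) : x ⬝ᵥ (Q *ᵥ x) ≤ 0 := by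
  rcases eq_or_ne x 0 with rfl | h
  · simp
  · exact (hneg x hx h).le

lemma revCS (hsymm : Q.IsHermitian)
    (hneg : ∀ x : Fin n → ℝ, e ⬝ᵥ (Q *ᵥ x) = 0 → x ≠ 0 → x ⬝ᵥ (Q *ᵥ x) < 0)
    (x y : Fin n → ℝ) (hx : 0 < x ⬝ᵥ (Q *ᵥ x)) :
    (x ⬝ᵥ (Q *ᵥ x)) * (y ⬝ᵥ (Q *ᵥ y)) ≤ (x ⬝ᵥ (Q *ᵥ y))^2 := by
  have hψx : e ⬝ᵥ (Q *ᵥ x) ≠ 0 := by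
    intro h0
    rcases eq_or_ne x 0 with rfl | hx0
    · simp at hx
    · exact absurd hx (not_lt.2 (hneg x h0 hx0).le)
  set z := (x ⬝ᵥ (Q *ᵥ x)) • y - (x ⬝ᵥ (Q *ᵥ y)) • x with hz
  have hBxz : x ⬝ᵥ (Q *ᵥ z) = 0 := by
    rw [hz]
    simp only [Matrix.mulVec_sub, Matrix.mulVec_smul, dotProduct_sub, dotProduct_smul,
      smul_eq_mul]
    ring
  have hBzx : z ⬝ᵥ (Q *ᵥ x) = 0 := by rw [bsymm hsymm]; exact hBxz
  have hqz : z ⬝ᵥ (Q *ᵥ z) ≤ 0 := by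
    set a := e ⬝ᵥ (Q *ᵥ z) with ha
    set b := e ⬝ᵥ (Q *ᵥ x) with hb
    set w := a • x - b • z with hw
    have hψw : e ⬝ᵥ (Q *ᵥ w) = 0 := by
      rw [hw]
      simp only [Matrix.mulVec_sub, Matrix.mulVec_smul, dotProduct_sub, dotProduct_smul,
        smul_eq_mul, ← ha, ← hb]
      ring
    have hqw : w ⬝ᵥ (Q *ᵥ w) ≤ 0 := negsemi hneg w hψw
    have hexp : w ⬝ᵥ (Q *ᵥ w) = a*a*(x ⬝ᵥ (Q *ᵥ x)) + b*b*(z ⬝ᵥ (Q *ᵥ z)) := by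
      rw [hw]
      simp only [Matrix.mulVec_sub, Matrix.mulVec_smul, dotProduct_sub, dotProduct_smul,
        sub_dotProduct, smul_dotProduct, smul_eq_mul, hBxz, hBzx]
      ring
    have hb2 : 0 < b*b := mul_self_pos.2 hψx
    nlinarith [mul_nonneg (mul_self_nonneg a) hx.le]
  have hzz : z ⬝ᵥ (Q *ᵥ z) =
      (x ⬝ᵥ (Q *ᵥ x)) * ((x ⬝ᵥ (Q *ᵥ x)) * (y ⬝ᵥ (Q *ᵥ y)) - (x ⬝ᵥ (Q *ᵥ y))^2) := by
    rw [hz]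
    simp only [Matrix.mulVec_sub, Matrix.mulVec_smul, dotProduct_sub, dotProduct_smul,
      sub_dotProduct, smul_dotProduct, smul_eq_mul]
    rw [bsymm hsymm y x]
    ring
  nlinarith

lemma strictPos (hsymm : Q.IsHermitian) (he : 0 < e ⬝ᵥ (Q *ᵥ e))
    (hneg : ∀ x : Fin n → ℝ, e ⬝ᵥ (Q *ᵥ x) = 0 → x ≠ 0 → x ⬝ᵥ (Q *ᵥ x) < 0)
    (x z : Fin n → ℝ) (hqx : 0 < x ⬝ᵥ (Q *ᵥ x)) (hψx : 0 < e ⬝ᵥ (Q *ᵥ x))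
    (hqz : 0 < z ⬝ᵥ (Q *ᵥ z)) (hψz : 0 < e ⬝ᵥ (Q *ᵥ z)) :
    0 < x ⬝ᵥ (Q *ᵥ z) := by
  have hne : x ⬝ᵥ (Q *ᵥ z) ≠ 0 := by
    intro h0
    have := revCS hsymm hneg x z hqx
    rw [h0] at this
    nlinarith
  rcases hne.lt_or_gt with hB | hB
  · exfalso
    set s := -(e ⬝ᵥ (Q *ᵥ x)) / (x ⬝ᵥ (Q *ᵥ z)) with hs
    have hspos : 0 < s := by
      rw [hs]; exact div_pos_of_neg_of_neg (neg_neg_iff_pos.2 hψx) hB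
    set zs := e + s • z with hzs
    have hqzs : 0 < zs ⬝ᵥ (Q *ᵥ zs) := by
      rw [hzs]
      simp only [Matrix.mulVec_add, Matrix.mulVec_smul, dotProduct_add, dotProduct_smul,
        add_dotProduct, smul_dotProduct, smul_eq_mul]
      rw [bsymm hsymm z e]
      nlinarith [mul_pos hspos hψz, mul_pos hspos (mul_pos hspos hqz)]
    have hBzs : x ⬝ᵥ (Q *ᵥ zs) = 0 := by
      rw [hzs]
      simp only [Matrix.mulVec_add, Matrix.mulVec_smul, dotProduct_add, dotProduct_smul,
        smul_eq_mul]
      rw [bsymm hsymm x e, hs]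
      field_simp
      ring
    have := revCS hsymm hneg x zs hqx
    rw [hBzs] at this
    nlinarith
  · exact hB

lemma Fpos (hsymm : Q.IsHermitian) (he : 0 < e ⬝ᵥ (Q *ᵥ e))
    (hneg : ∀ x : Fin n → ℝ, e ⬝ᵥ (Q *ᵥ x) = 0 → x ≠ 0 → x ⬝ᵥ (Q *ᵥ x) < 0)
    (x y : Fin n → ℝ) (hqx : 0 < x ⬝ᵥ (Q *ᵥ x)) (hψx : 0 < e ⬝ᵥ (Q *ᵥ x))
    (hqy : 0 ≤ y ⬝ᵥ (Q *ᵥ y)) (hψy : 0 ≤ e ⬝ᵥ (Q *ᵥ y)) :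
    0 ≤ x ⬝ᵥ (Q *ᵥ y) := by
  by_contra hB
  push_neg at hB
  set t := -(x ⬝ᵥ (Q *ᵥ y)) / (e ⬝ᵥ (Q *ᵥ x)) with ht
  have htpos : 0 < t := div_pos (neg_pos.2 hB) hψx
  set yt := y + t • e with hyt
  have hqyt : 0 < yt ⬝ᵥ (Q *ᵥ yt) := by
    rw [hyt]
    simp only [Matrix.mulVec_add, Matrix.mulVec_smul, dotProduct_add, dotProduct_smul,
      add_dotProduct, smul_dotProduct, smul_eq_mul]
    rw [bsymm hsymm y e]
    nlinarith [mul_pos htpos he, mul_nonneg htpos.le hψy, mul_pos (mul_pos htpos htpos) he]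
  have hψyt : 0 < e ⬝ᵥ (Q *ᵥ yt) := by
    rw [hyt]
    simp only [Matrix.mulVec_add, Matrix.mulVec_smul, dotProduct_add, dotProduct_smul,
      smul_eq_mul]
    nlinarith [mul_pos htpos he]
  have h0 := strictPos hsymm he hneg x yt hqx hψx hqyt hψyt
  have : x ⬝ᵥ (Q *ᵥ yt) = 0 := by
    rw [hyt]
    simp only [Matrix.mulVec_add, Matrix.mulVec_smul, dotProduct_add, dotProduct_smul,
      smul_eq_mul]
    rw [bsymm hsymm x e, ht]
    field_simp
    ring
  rw [this] at h0
  exact lt_irrefl _ h0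

lemma FFpos (hsymm : Q.IsHermitian) (he : 0 < e ⬝ᵥ (Q *ᵥ e))
    (hneg : ∀ x : Fin n → ℝ, e ⬝ᵥ (Q *ᵥ x) = 0 → x ≠ 0 → x ⬝ᵥ (Q *ᵥ x) < 0)
    (x y : Fin n → ℝ) (hqx : 0 ≤ x ⬝ᵥ (Q *ᵥ x)) (hψx : 0 ≤ e ⬝ᵥ (Q *ᵥ x))
    (hqy : 0 ≤ y ⬝ᵥ (Q *ᵥ y)) (hψy : 0 ≤ e ⬝ᵥ (Q *ᵥ y)) :
    0 ≤ x ⬝ᵥ (Q *ᵥ y) := by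
  have hgen : ∀ ε : ℝ, 0 < ε → 0 ≤ x ⬝ᵥ (Q *ᵥ y) + ε * (e ⬝ᵥ (Q *ᵥ y)) := by
    intro ε hε
    have h1 := Fpos hsymm he hneg (x + ε • e) y ?_ ?_ hqy hψy
    · rw [add_dotProduct, smul_dotProduct] at h1
      simpa using h1
    · simp only [Matrix.mulVec_add, Matrix.mulVec_smul, dotProduct_add, dotProduct_smul,
        add_dotProduct, smul_dotProduct, smul_eq_mul]
      rw [bsymm hsymm x e]
      nlinarith [mul_nonneg hε.le hψx, mul_pos (mul_pos hε hε) he]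
    · simp only [Matrix.mulVec_add, Matrix.mulVec_smul, dotProduct_add, dotProduct_smul,
        smul_eq_mul]
      nlinarith [mul_pos hε he]
  by_contra hB
  push_neg at hB
  rcases eq_or_lt_of_le hψy with hy0 | hy0
  · have := hgen 1 one_pos
    rw [← hy0] at this
    linarith
  · have hεpos : 0 < -(x ⬝ᵥ (Q *ᵥ y)) / (2 * (e ⬝ᵥ (Q *ᵥ y))) :=
      div_pos (neg_pos.2 hB) (by linarith)
    have h1 := hgen _ hεpos
    have hkey : -(x ⬝ᵥ (Q *ᵥ y)) / (2 * (e ⬝ᵥ (Q *ᵥ y))) * (e ⬝ᵥ (Q *ᵥ y))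
        = -(x ⬝ᵥ (Q *ᵥ y)) / 2 := by
      field_simp
    rw [hkey] at h1
    linarith

lemma isCompact_convexHull_aux {S : Set (Fin n → ℝ)} (hS : IsCompact S)
    (hne : S.Nonempty) : IsCompact (convexHull ℝ S) := by
  classical
  obtain ⟨s₀, hs₀⟩ := hne
  set N := n + 1 with hN
  set g : (Fin N → ℝ) × (Fin N → (Fin n → ℝ)) → (Fin n → ℝ) :=
    fun p => ∑ j, p.1 j • p.2 j with hg
  set T : Set ((Fin N → ℝ) × (Fin N → (Fin n → ℝ))) :=
    (stdSimplex ℝ (Fin N)) ×ˢ (Set.univ.pi fun _ => S) with hT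
  have hTcomp : IsCompact T := (isCompact_stdSimplex _ _).prod (isCompact_univ_pi fun _ => hS)
  have hgcont : Continuous g := by
    apply continuous_finset_sum
    intro j _
    exact ((continuous_apply j).comp continuous_fst).smul
      ((continuous_apply j).comp continuous_snd)
  have himg : convexHull ℝ S = g '' T := by
    apply Set.Subset.antisymm
    · intro x hx
      rw [convexHull_eq_union] at hx
      simp only [Set.mem_iUnion] at hx
      obtain ⟨t, hts, hai, hxt⟩ := hx
      have hcard : t.card ≤ N := by
        have h1 := hai.card_le_finrank_succ
        have h2 : Module.finrank ℝ (vectorSpan ℝ (Set.range ((↑) : ↥t → (Fin n → ℝ)))) ≤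
            Module.finrank ℝ (Fin n → ℝ) := Submodule.finrank_le _
        rw [Fintype.card_coe] at h1
        have h3 : Module.finrank ℝ (Fin n → ℝ) = n := Module.finrank_fin_fun ℝ
        omega
      rw [Finset.convexHull_eq] at hxt
      obtain ⟨w, hw0, hw1, hwx⟩ := hxt
      rw [Finset.centerMass_eq_of_sum_1 _ _ hw1] at hwx
      set eqv := t.equivFin with heqv
      have hre : ∀ {M : Type} (inst : AddCommMonoid M) (φ : (Fin n → ℝ) → M),
          (∑ j : Fin N, if h : (j : ℕ) < t.card then φ ((eqv.symm ⟨(j : ℕ), h⟩ : ↥t) : Fin n → ℝ)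
            else 0) = ∑ y ∈ t, φ y := by
        intro M inst φ
        have hstep1 : ∑ y ∈ t, φ y = ∑ i : Fin t.card, φ ((eqv.symm i : ↥t) : Fin n → ℝ) := by
          rw [← Finset.sum_coe_sort t (fun y => φ y)]
          exact (Equiv.sum_comp eqv.symm (fun y : ↥t => φ (y : Fin n → ℝ))).symm
        rw [hstep1]
        have hvan : ∀ j ∈ Finset.univ, j ∉ Finset.univ.map (Fin.castLEEmb hcard) →
            (if h : (j : ℕ) < t.card then φ ((eqv.symm ⟨(j : ℕ), h⟩ : ↥t) : Fin n → ℝ)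
              else 0) = 0 := by
          intro j _ hj
          have hjlt : ¬ ((j : ℕ) < t.card) := by
            intro hlt
            apply hj
            rw [Finset.mem_map]
            exact ⟨⟨(j : ℕ), hlt⟩, Finset.mem_univ _, by simp [Fin.castLEEmb, Fin.castLE]⟩
          rw [dif_neg hjlt]
        rw [← Finset.sum_subset (Finset.subset_univ _) hvan, Finset.sum_map]
        refine Finset.sum_congr rfl fun i _ => ?_
        have hlt : ((Fin.castLEEmb hcard i : Fin N) : ℕ) < t.card := by
          simp [Fin.castLEEmb, Fin.castLE]
        rw [dif_pos hlt]
        have heq : (⟨((Fin.castLEEmb hcard i : Fin N) : ℕ), hlt⟩ : Fin t.card) = i := by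
          apply Fin.ext
          simp [Fin.castLEEmb, Fin.castLE]
        rw [heq]
      -- build the point in T
      set W : Fin N → ℝ := fun j =>
        if h : (j : ℕ) < t.card then w ((eqv.symm ⟨(j : ℕ), h⟩ : ↥t) : Fin n → ℝ) else 0 with hW
      set V : Fin N → (Fin n → ℝ) := fun j =>
        if h : (j : ℕ) < t.card then ((eqv.symm ⟨(j : ℕ), h⟩ : ↥t) : Fin n → ℝ) else s₀ with hV
      refine ⟨(W, V), ⟨?_, ?_⟩, ?_⟩
      · constructor
        · intro j
          rw [hW]
          dsimp only
          split
          · exact hw0 _ (Subtype.mem _)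
          · exact le_refl 0
        · rw [hW]
          exact (hre _ w).trans hw1
      · intro j _
        rw [hV]
        dsimp only
        split
        · exact hts (Subtype.mem _)
        · exact hs₀
      · show ∑ j : Fin N, W j • V j = x
        have : ∀ j : Fin N, W j • V j =
            if h : (j : ℕ) < t.card then
              (fun y : Fin n → ℝ => w y • y) ((eqv.symm ⟨(j : ℕ), h⟩ : ↥t) : Fin n → ℝ)
            else 0 := by
          intro j
          rw [hW, hV]
          dsimp only
          split
          · rfl
          · rw [zero_smul]
        rw [Finset.sum_congr rfl fun j _ => this j, hre _ (fun y => w y • y)]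
        simpa using hwx
    · rintro x ⟨p, hp, rfl⟩
      obtain ⟨hW, hV⟩ := hp
      have hmem : ∀ j, p.2 j ∈ S := fun j => hV j (Set.mem_univ j)
      have := Finset.centerMass_mem_convexHull Finset.univ
        (fun j _ => hW.1 j) (by rw [hW.2]; norm_num) (fun j _ => hmem j)
      rwa [Finset.centerMass_eq_of_sum_1 _ _ hW.2] at this
  rw [himg]
  exact hTcomp.image hgcont


lemma contB (A : Matrix (Fin n) (Fin n) ℝ) (a : Fin n → ℝ) :
    Continuous fun x : Fin n → ℝ => a ⬝ᵥ (A *ᵥ x) := by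
  have : (fun x : Fin n → ℝ => a ⬝ᵥ (A *ᵥ x)) =
      fun x => ∑ i, a i * ∑ j, A i j * x j := by
    funext x; simp [dotProduct, Matrix.mulVec]
  rw [this]
  exact continuous_finset_sum _ fun i _ => continuous_const.mul
    (continuous_finset_sum _ fun j _ => continuous_const.mul (continuous_apply j))

lemma contQuad (A : Matrix (Fin n) (Fin n) ℝ) :
    Continuous fun x : Fin n → ℝ => x ⬝ᵥ (A *ᵥ x) := by
  have : (fun x : Fin n → ℝ => x ⬝ᵥ (A *ᵥ x)) =
      fun x => ∑ i, x i * ∑ j, A i j * x j := by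
    funext x; simp [dotProduct, Matrix.mulVec]
  rw [this]
  exact continuous_finset_sum _ fun i _ => (continuous_apply i).mul
    (continuous_finset_sum _ fun j _ => continuous_const.mul (continuous_apply j))

end AuxiliaryLemmas

set_option maxHeartbeats 2000000 in
/-- Let `q(x) = xᵀQx` be a quadratic form whose symmetric matrix `Q` is
nonsingular and has exactly one positive eigenvalue. Let `K` be a proper convex cone whose
set of vectors spanning extreme rays is path-connected. Then `q` is `K`-Lorentzian if and
only if `q(v) ≥ 0` for every `v` spanning an extreme ray of `K`. -/
theorem stmt3 {n : ℕ} (K : Set (Fin n → ℝ)) (hK : IsProperCone K)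
    (Q : Matrix (Fin n) (Fin n) ℝ) (hsymm : Q.IsHermitian) (hns : Q.det ≠ 0)
    (heig : posEigCount Q = 1)
    (hpath : IsPathConnected {v : Fin n → ℝ | SpansExtremeRay K v}) :
    IsLorentzianMatrix K Q ↔
      ∀ v : Fin n → ℝ, SpansExtremeRay K v → 0 ≤ v ⬝ᵥ (Q *ᵥ v) := by
  obtain ⟨hconv, hscale, hclosed, hpointed, hint⟩ := hK
  constructor
  · -- forward direction
    intro hL v hv
    obtain ⟨x₀, hx₀⟩ := hint
    have hvK : v ∈ K := hv.1
    have hmem : ∀ t : ℝ, t ∈ Set.Ioc (0:ℝ) 1 →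
        0 < (v + t • (x₀ - v)) ⬝ᵥ (Q *ᵥ (v + t • (x₀ - v))) := by
      intro t ht
      have hz : v + t • (x₀ - v) ∈ interior K :=
        hconv.add_smul_sub_mem_interior hvK hx₀ ht
      exact hL.2 _ hz _ hz
    have hc : Continuous fun t : ℝ => v + t • (x₀ - v) :=
      continuous_const.add (continuous_id.smul continuous_const)
    have htends : Filter.Tendsto
        (fun t : ℝ => (v + t • (x₀ - v)) ⬝ᵥ (Q *ᵥ (v + t • (x₀ - v))))
        (nhdsWithin 0 (Set.Ioi 0)) (nhds (v ⬝ᵥ (Q *ᵥ v))) := by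
      have h2 := ((contQuad Q).comp hc).tendsto 0
      simp only [Function.comp, zero_smul, add_zero] at h2
      exact h2.mono_left nhdsWithin_le_nhds
    refine ge_of_tendsto htends ?_
    filter_upwards [Ioc_mem_nhdsGT_of_mem (Set.mem_Ico.2 ⟨le_refl 0, zero_lt_one⟩)] with t ht
    exact (hmem t ht).le
  · -- backward direction
    intro hQv
    obtain ⟨e₀, he₀, hneg₀⟩ := spectral hsymm hns heig
    set E := {v : Fin n → ℝ | SpansExtremeRay K v} with hE
    have hpre : IsPreconnected E := (IsPathConnected.isConnected hpath).isPreconnected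
    obtain ⟨v₀, hv₀E, hjoin⟩ := hpath
    -- each extreme vector has nonzero ψ₀
    have hψne : ∀ v ∈ E, e₀ ⬝ᵥ (Q *ᵥ v) ≠ 0 := by
      intro v hv h0
      exact absurd (hQv v hv) (not_le.2 (hneg₀ v h0 hv.2.1))
    -- choose the sign of e
    obtain ⟨e, he, hneg, hEψ⟩ :
        ∃ e : Fin n → ℝ, 0 < e ⬝ᵥ (Q *ᵥ e) ∧
          (∀ x : Fin n → ℝ, e ⬝ᵥ (Q *ᵥ x) = 0 → x ≠ 0 → x ⬝ᵥ (Q *ᵥ x) < 0) ∧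
          ∀ v ∈ E, 0 < e ⬝ᵥ (Q *ᵥ v) := by
      have hopen₁ : IsOpen {v : Fin n → ℝ | 0 < e₀ ⬝ᵥ (Q *ᵥ v)} :=
        isOpen_lt continuous_const (contB Q e₀)
      have hopen₂ : IsOpen {v : Fin n → ℝ | e₀ ⬝ᵥ (Q *ᵥ v) < 0} :=
        isOpen_lt (contB Q e₀) continuous_const
      have hdisj : Disjoint {v : Fin n → ℝ | 0 < e₀ ⬝ᵥ (Q *ᵥ v)}
          {v : Fin n → ℝ | e₀ ⬝ᵥ (Q *ᵥ v) < 0} := by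
        rw [Set.disjoint_left]
        intro a ha hb
        simp only [Set.mem_setOf_eq] at ha hb
        linarith
      have hsub : E ⊆ {v : Fin n → ℝ | 0 < e₀ ⬝ᵥ (Q *ᵥ v)} ∪
          {v : Fin n → ℝ | e₀ ⬝ᵥ (Q *ᵥ v) < 0} := by
        intro v hv
        rcases (hψne v hv).lt_or_gt with h | h
        · exact Or.inr h
        · exact Or.inl h
      rcases (hψne v₀ hv₀E).lt_or_gt with hneg' | hpos'
      · -- all extreme vectors have ψ₀ < 0; use -e₀
        have hsub' : E ⊆ {v : Fin n → ℝ | e₀ ⬝ᵥ (Q *ᵥ v) < 0} :=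
          IsPreconnected.subset_left_of_subset_union hopen₂ hopen₁
            hdisj.symm (by rw [Set.union_comm] at hsub; exact hsub) ⟨v₀, hv₀E, hneg'⟩ hpre
        refine ⟨-e₀, ?_, ?_, ?_⟩
        · simp only [Matrix.mulVec_neg, dotProduct_neg, neg_dotProduct, neg_neg]
          exact he₀
        · intro x hx hx0
          apply hneg₀ x ?_ hx0
          rwa [neg_dotProduct, neg_eq_zero] at hx
        · intro v hv
          have h3 := hsub' hv
          simp only [Set.mem_setOf_eq] at h3
          rw [neg_dotProduct]
          exact neg_pos.2 h3
      · have hsub' : E ⊆ {v : Fin n → ℝ | 0 < e₀ ⬝ᵥ (Q *ᵥ v)} :=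
          IsPreconnected.subset_left_of_subset_union hopen₁ hopen₂
            hdisj hsub ⟨v₀, hv₀E, hpos'⟩ hpre
        exact ⟨e₀, he₀, hneg₀, fun v hv => hsub' hv⟩
    -- the closed Lorentz cone F
    set F := {x : Fin n → ℝ | 0 ≤ x ⬝ᵥ (Q *ᵥ x) ∧ 0 ≤ e ⬝ᵥ (Q *ᵥ x)} with hF
    have h0F : (0 : Fin n → ℝ) ∈ F := by constructor <;> simp
    have hFclosed : IsClosed F := by
      have : F = {x : Fin n → ℝ | 0 ≤ x ⬝ᵥ (Q *ᵥ x)} ∩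
          {x : Fin n → ℝ | 0 ≤ e ⬝ᵥ (Q *ᵥ x)} := rfl
      rw [this]
      exact (isClosed_le continuous_const (contQuad Q)).inter
        (isClosed_le continuous_const (contB Q e))
    have hFcone : ∀ c : ℝ, 0 ≤ c → ∀ x ∈ F, c • x ∈ F := by
      intro c hc x hx
      constructor
      · simp only [Matrix.mulVec_smul, dotProduct_smul, smul_dotProduct, smul_eq_mul]
        nlinarith [hx.1, mul_nonneg hc hc]
      · simp only [Matrix.mulVec_smul, dotProduct_smul, smul_eq_mul]
        exact mul_nonneg hc hx.2
    have hFconvex : Convex ℝ F := by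
      intro x hx y hy a b ha hb hab
      have hB := FFpos hsymm he hneg x y hx.1 hx.2 hy.1 hy.2
      constructor
      · have hexp : (a • x + b • y) ⬝ᵥ (Q *ᵥ (a • x + b • y)) =
            a*a*(x ⬝ᵥ (Q *ᵥ x)) + 2*a*b*(x ⬝ᵥ (Q *ᵥ y)) + b*b*(y ⬝ᵥ (Q *ᵥ y)) := by
          simp only [Matrix.mulVec_add, Matrix.mulVec_smul, dotProduct_add, dotProduct_smul,
            add_dotProduct, smul_dotProduct, smul_eq_mul]
          rw [bsymm hsymm y x]
          ring
        rw [hexp]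
        nlinarith [hx.1, hy.1, mul_nonneg ha hb, mul_nonneg (mul_nonneg ha hb) hB,
          mul_nonneg (mul_nonneg ha ha) hx.1, mul_nonneg (mul_nonneg hb hb) hy.1]
      · simp only [Matrix.mulVec_add, Matrix.mulVec_smul, dotProduct_add, dotProduct_smul,
          smul_eq_mul]
        nlinarith [mul_nonneg ha hx.2, mul_nonneg hb hy.2]
    have hEF : E ⊆ F := fun v hv => ⟨hQv v hv, (hEψ v hv).le⟩
    -- the strictly positive linear functional
    set S := K ∩ Metric.sphere (0 : Fin n → ℝ) 1 with hS
    have hSK : S ⊆ K := Set.inter_subset_left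
    have hSnorm : ∀ x ∈ S, ‖x‖ = 1 := fun x hx => by
      have := hx.2; rwa [mem_sphere_zero_iff_norm] at this
    have hSne : S.Nonempty := by
      refine ⟨‖v₀‖⁻¹ • v₀, hscale _ (inv_nonneg.2 (norm_nonneg _)) _ hv₀E.1, ?_⟩
      rw [mem_sphere_zero_iff_norm, norm_smul, norm_inv, norm_norm]
      exact inv_mul_cancel₀ (norm_ne_zero_iff.2 hv₀E.2.1)
    have hScomp : IsCompact S := (isCompact_sphere 0 1).inter_left hclosed
    have hCH : IsCompact (convexHull ℝ S) := isCompact_convexHull_aux hScomp hSne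
    have hK0 : (0 : Fin n → ℝ) ∈ K := by
      have : (0 : Fin n → ℝ) ∈ ({0} : Set (Fin n → ℝ)) := rfl
      rw [← hpointed] at this
      exact this.1
    have hKadd : ∀ x ∈ K, ∀ y ∈ K, x + y ∈ K := by
      intro x hx y hy
      have h1 : (1/2 : ℝ) • x + (1/2 : ℝ) • y ∈ K :=
        hconv hx hy (by norm_num) (by norm_num) (by norm_num)
      have h2 := hscale 2 (by norm_num) _ h1
      rwa [smul_add, smul_smul, smul_smul, show (2:ℝ) * (1/2) = 1 by norm_num, one_smul,
        one_smul] at h2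
    have h0CH : (0 : Fin n → ℝ) ∉ convexHull ℝ S := by
      intro h0
      rw [convexHull_eq_union_convexHull_finite_subsets] at h0
      simp only [Set.mem_iUnion] at h0
      obtain ⟨t, hts, h0t⟩ := h0
      rw [Finset.convexHull_eq] at h0t
      obtain ⟨w, hw0, hw1, hwx⟩ := h0t
      rw [Finset.centerMass_eq_of_sum_1 _ _ hw1] at hwx
      have hex : ∃ y ∈ t, 0 < w y := by
        by_contra hno
        push_neg at hno
        have : ∑ y ∈ t, w y ≤ 0 := Finset.sum_nonpos hno
        linarith
      obtain ⟨y₀, hy₀t, hy₀pos⟩ := hex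
      have hsum := Finset.add_sum_erase t (fun y => w y • id y) hy₀t
      rw [hwx] at hsum
      set R := ∑ y ∈ t.erase y₀, w y • id y with hR
      have hRK : R ∈ K := by
        rw [hR]
        refine Finset.sum_induction _ (· ∈ K) (fun a b ha hb => hKadd a ha b hb) hK0 ?_
        intro y hy
        exact hscale _ (hw0 y (Finset.mem_of_mem_erase hy)) _ (hSK (hts (Finset.mem_of_mem_erase hy)))
      have hyK : w y₀ • y₀ ∈ K := hscale _ hy₀pos.le _ (hSK (hts hy₀t))
      have hyNK : w y₀ • y₀ ∈ -K := by
        rw [Set.mem_neg]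
        simp only [id_eq] at hsum
        rw [neg_eq_of_add_eq_zero_right hsum]
        exact hRK
      have : w y₀ • y₀ ∈ K ∩ (-K) := ⟨hyK, hyNK⟩
      rw [hpointed] at this
      have hy0 : y₀ = (0 : Fin n → ℝ) := by
        have h2 : w y₀ • y₀ = (0 : Fin n → ℝ) := this
        rcases smul_eq_zero.1 h2 with h | h
        · exact absurd h (ne_of_gt hy₀pos)
        · exact h
      have := hSnorm y₀ (hts hy₀t)
      rw [hy0] at this
      simp at this
    obtain ⟨f, u, hfu, hb⟩ :=
      geometric_hahn_banach_point_closed (convex_convexHull ℝ S) hCH.isClosed h0CH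
    rw [map_zero] at hfu
    have hfpos : ∀ x ∈ K, x ≠ 0 → 0 < f x := by
      intro x hx hx0
      have hxn : (0:ℝ) < ‖x‖ := norm_pos_iff.2 hx0
      have hunit : ‖x‖⁻¹ • x ∈ S := by
        refine ⟨hscale _ (inv_nonneg.2 (norm_nonneg _)) _ hx, ?_⟩
        rw [mem_sphere_zero_iff_norm, norm_smul, norm_inv, norm_norm]
        exact inv_mul_cancel₀ (ne_of_gt hxn)
      have := hb _ (subset_convexHull ℝ S hunit)
      rw [f.map_smul] at this
      simp only [smul_eq_mul] at this
      have h3 : 0 < ‖x‖⁻¹ * f x := lt_trans hfu this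
      have h4 : f x = ‖x‖ * (‖x‖⁻¹ * f x) := by field_simp
      rw [h4]
      exact mul_pos hxn h3
    -- the compact convex base
    set Bset := {x : Fin n → ℝ | x ∈ K ∧ f x = 1} with hBset
    have hBconv : Convex ℝ Bset := by
      intro x hx y hy a b ha hb' hab
      refine ⟨hconv hx.1 hy.1 ha hb' hab, ?_⟩
      rw [f.map_add, f.map_smul, f.map_smul, smul_eq_mul, smul_eq_mul, hx.2, hy.2]
      linarith
    have hBclosed : IsClosed Bset := by
      have : Bset = K ∩ f ⁻¹' {1} := by
        ext x; simp [hBset, Set.mem_preimage]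
      rw [this]
      exact hclosed.inter (isClosed_singleton.preimage f.continuous)
    have hu : 0 < u := hfu
    have hBsub : Bset ⊆ Metric.closedBall 0 (1/u) := by
      intro x hx
      have hx0 : x ≠ 0 := by
        intro h
        have h2 := hx.2
        rw [h, f.map_zero] at h2
        exact one_ne_zero h2.symm
      have hxn : (0:ℝ) < ‖x‖ := norm_pos_iff.2 hx0
      have hunit : ‖x‖⁻¹ • x ∈ S := by
        refine ⟨hscale _ (inv_nonneg.2 (norm_nonneg _)) _ hx.1, ?_⟩
        rw [mem_sphere_zero_iff_norm, norm_smul, norm_inv, norm_norm]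
        exact inv_mul_cancel₀ (ne_of_gt hxn)
      have h2 := hb _ (subset_convexHull ℝ S hunit)
      rw [f.map_smul] at h2
      simp only [smul_eq_mul, hx.2, mul_one] at h2
      rw [Metric.mem_closedBall, dist_zero_right]
      have h3 : u * ‖x‖ < 1 := by
        have h4 := mul_lt_mul_of_pos_right h2 hxn
        rwa [inv_mul_cancel₀ (ne_of_gt hxn)] at h4
      rw [le_div_iff₀ hu]
      nlinarith
    have hBcomp : IsCompact Bset :=
      (isCompact_closedBall (0 : Fin n → ℝ) (1/u)).of_isClosed_subset hBclosed hBsub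
    -- extreme points of the base span extreme rays
    have hExtE : Bset.extremePoints ℝ ⊆ E := by
      intro v hv
      obtain ⟨hvB, hvext⟩ := hv
      have hv0 : v ≠ 0 := by
        intro h
        have h2 := hvB.2
        rw [h, f.map_zero] at h2
        exact one_ne_zero h2.symm
      refine ⟨hvB.1, hv0, ?_⟩
      intro x hx y hy hxy
      rcases eq_or_ne x 0 with rfl | hx0
      · refine ⟨⟨0, le_refl 0, by rw [zero_smul]⟩, ⟨1, zero_le_one, ?_⟩⟩
        rw [one_smul, hxy, zero_add]
      rcases eq_or_ne y 0 with rfl | hy0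
      · refine ⟨⟨1, zero_le_one, ?_⟩, ⟨0, le_refl 0, by rw [zero_smul]⟩⟩
        rw [one_smul, hxy, add_zero]
      have hfx : 0 < f x := hfpos x hx hx0
      have hfy : 0 < f y := hfpos y hy hy0
      have hfv : f x + f y = 1 := by rw [← f.map_add, ← hxy, hvB.2]
      have hxB : (f x)⁻¹ • x ∈ Bset := by
        refine ⟨hscale _ (inv_nonneg.2 hfx.le) _ hx, ?_⟩
        rw [f.map_smul, smul_eq_mul, inv_mul_cancel₀ (ne_of_gt hfx)]
      have hyB : (f y)⁻¹ • y ∈ Bset := by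
        refine ⟨hscale _ (inv_nonneg.2 hfy.le) _ hy, ?_⟩
        rw [f.map_smul, smul_eq_mul, inv_mul_cancel₀ (ne_of_gt hfy)]
      have hseg : v ∈ openSegment ℝ ((f x)⁻¹ • x) ((f y)⁻¹ • y) := by
        refine ⟨f x, f y, hfx, hfy, hfv, ?_⟩
        rw [smul_smul, smul_smul, mul_inv_cancel₀ (ne_of_gt hfx),
          mul_inv_cancel₀ (ne_of_gt hfy), one_smul, one_smul]
        exact hxy.symm
      obtain ⟨hxv, hyv⟩ := (mem_extremePoints.1 ⟨hvB, hvext⟩).2 _ hxB _ hyB hseg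
      constructor
      · refine ⟨f x, hfx.le, ?_⟩
        rw [← hxv, smul_smul, mul_inv_cancel₀ (ne_of_gt hfx), one_smul]
      · refine ⟨f y, hfy.le, ?_⟩
        rw [← hyv, smul_smul, mul_inv_cancel₀ (ne_of_gt hfy), one_smul]
    -- K ⊆ F via Krein-Milman
    have hKM := closure_convexHull_extremePoints hBcomp hBconv
    have hBF : Bset ⊆ F := by
      intro x hx
      rw [← hKM] at hx
      exact hFclosed.closure_subset_iff.2
        (convexHull_min (Set.Subset.trans hExtE hEF) hFconvex) hx
    have hKF : K ⊆ F := by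
      intro x hx
      rcases eq_or_ne x 0 with rfl | hx0
      · exact h0F
      have hfx : 0 < f x := hfpos x hx hx0
      have hxB : (f x)⁻¹ • x ∈ Bset := by
        refine ⟨hscale _ (inv_nonneg.2 hfx.le) _ hx, ?_⟩
        rw [f.map_smul, smul_eq_mul, inv_mul_cancel₀ (ne_of_gt hfx)]
      have := hFcone (f x) hfx.le _ (hBF hxB)
      rwa [smul_smul, mul_inv_cancel₀ (ne_of_gt hfx), one_smul] at this
    -- interior points of F are strictly inside the Lorentz cone
    have h0int : (0 : Fin n → ℝ) ∉ interior F := by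
      intro h0
      rw [mem_interior_iff_mem_nhds, Metric.mem_nhds_iff] at h0
      obtain ⟨ε, hε, hball⟩ := h0
      have he0 : e ≠ 0 := by
        intro h
        rw [h] at he
        simp at he
      have hen : (0:ℝ) < ‖e‖ := norm_pos_iff.2 he0
      set c := ε / (2 * ‖e‖) with hc
      have hcpos : 0 < c := div_pos hε (by linarith)
      have hmem : c • (-e) ∈ F := by
        apply hball
        rw [Metric.mem_ball, dist_zero_right, norm_smul, norm_neg, Real.norm_eq_abs,
          abs_of_pos hcpos, hc]
        rw [div_mul_eq_mul_div, div_lt_iff₀ (by linarith : (0:ℝ) < 2 * ‖e‖)]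
        nlinarith
      have := hmem.2
      rw [Matrix.mulVec_smul, dotProduct_smul, smul_eq_mul] at this
      have h2 : e ⬝ᵥ (Q *ᵥ (-e)) = -(e ⬝ᵥ (Q *ᵥ e)) := by
        rw [Matrix.mulVec_neg, dotProduct_neg]
      rw [h2] at this
      nlinarith
    have hintP : ∀ z ∈ interior F, 0 < z ⬝ᵥ (Q *ᵥ z) ∧ 0 < e ⬝ᵥ (Q *ᵥ z) := by
      intro z hz
      have hzF : z ∈ F := interior_subset hz
      have hz0 : z ≠ 0 := by
        intro h
        rw [h] at hz
        exact h0int hz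
      have hψz : 0 < e ⬝ᵥ (Q *ᵥ z) := by
        rcases lt_or_eq_of_le hzF.2 with h | h
        · exact h
        · exact absurd (hneg z h.symm hz0) (not_lt.2 hzF.1)
      refine ⟨?_, hψz⟩
      rcases lt_or_eq_of_le hzF.1 with h | h
      · exact h
      exfalso
      -- q z = 0, z ≠ 0: z is on the boundary of the light cone, not interior
      have hQz : Q *ᵥ z ≠ 0 := by
        intro hq
        apply hz0
        have : Q⁻¹ *ᵥ (Q *ᵥ z) = z := by
          rw [Matrix.mulVec_mulVec, Matrix.nonsing_inv_mul Q (isUnit_iff_ne_zero.2 hns), Matrix.one_mulVec]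
        rw [hq, Matrix.mulVec_zero] at this
        exact this.symm
      set w := -(Q *ᵥ z) with hw
      set d := (Q *ᵥ z) ⬝ᵥ (Q *ᵥ z) with hd
      have hdpos : 0 < d := by
        rcases lt_or_eq_of_le (by simpa [star_trivial] using
          dotProduct_self_star_nonneg (R := ℝ) (Q *ᵥ z)) with h' | h'
        · exact h'
        · exact absurd (dotProduct_self_eq_zero.1 h'.symm) hQz
      have hwz : w ⬝ᵥ (Q *ᵥ z) = -d := by
        rw [hw, neg_dotProduct, hd]
      rw [mem_interior_iff_mem_nhds, Metric.mem_nhds_iff] at hz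
      obtain ⟨ε, hε, hball⟩ := hz
      set t := min (ε / (2 * (‖w‖ + 1))) (d / (|w ⬝ᵥ (Q *ᵥ w)| + 1)) with ht
      have hwn : (0:ℝ) ≤ ‖w‖ := norm_nonneg w
      have htpos : 0 < t := by
        apply lt_min
        · exact div_pos hε (by linarith)
        · exact div_pos hdpos (by positivity)
      have htle : t * (|w ⬝ᵥ (Q *ᵥ w)| + 1) ≤ d := by
        have h1 : t ≤ d / (|w ⬝ᵥ (Q *ᵥ w)| + 1) := min_le_right _ _
        rw [le_div_iff₀ (by positivity)] at h1
        exact h1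
      have hmem : z + t • w ∈ F := by
        apply hball
        rw [Metric.mem_ball, dist_eq_norm, add_sub_cancel_left, norm_smul, Real.norm_eq_abs,
          abs_of_pos htpos]
        have h7 : t * (2 * (‖w‖ + 1)) ≤ ε :=
          (le_div_iff₀ (by positivity)).1 (min_le_left _ _)
        nlinarith [mul_nonneg htpos.le hwn]
      have hq2 : (z + t • w) ⬝ᵥ (Q *ᵥ (z + t • w)) < 0 := by
        have hexp : (z + t • w) ⬝ᵥ (Q *ᵥ (z + t • w)) =
            z ⬝ᵥ (Q *ᵥ z) + 2*t*(w ⬝ᵥ (Q *ᵥ z)) + t*t*(w ⬝ᵥ (Q *ᵥ w)) := by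
          simp only [Matrix.mulVec_add, Matrix.mulVec_smul, dotProduct_add, dotProduct_smul,
            add_dotProduct, smul_dotProduct, smul_eq_mul]
          rw [bsymm hsymm z w]
          ring
        rw [hexp, ← h, hwz]
        have habs : w ⬝ᵥ (Q *ᵥ w) ≤ |w ⬝ᵥ (Q *ᵥ w)| := le_abs_self _
        have h5 : t * (w ⬝ᵥ (Q *ᵥ w)) < d := by
          nlinarith [mul_le_mul_of_nonneg_left habs htpos.le]
        have h6 := mul_lt_mul_of_pos_left h5 htpos
        nlinarith [mul_pos htpos hdpos]
      exact absurd hmem.1 (not_le.2 hq2)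
    -- conclude
    refine ⟨heig, ?_⟩
    intro x hx y hy
    have hxF := interior_mono hKF hx
    have hyF := interior_mono hKF hy
    obtain ⟨hqx, hψx⟩ := hintP x hxF
    obtain ⟨hqy, hψy⟩ := hintP y hyF
    exact strictPos hsymm he hneg y x hqy hψy hqx hψx
end

section
/- Let K ⊆ ℝ^n be a self-dual proper convex cone. A quadratic form q(x) = xᵀQx with real symmetric matrix Q is K-Lorentzian if and only if Q has exactly one positive eigenvalue (counted with multiplicity) and Q is K-nonnegative (i.e. Q(K) ⊆ K). -/
open Matrix

/-- An interior point of a self-dual cone pairs strictly positively with nonzero cone points. -/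
lemma interior_dot_pos {n : ℕ} {K : Set (Fin n → ℝ)} (hsd : K = dualConeSet K)
    {y v : Fin n → ℝ} (hy : y ∈ interior K) (hv : v ∈ K) (hv0 : v ≠ 0) :
    0 < y ⬝ᵥ v := by
  obtain ⟨ε, hε, hball⟩ := Metric.mem_nhds_iff.mp (mem_interior_iff_mem_nhds.mp hy)
  set c : ℝ := ε / (2 * (‖v‖ + 1)) with hc
  have hvnorm : (0:ℝ) < ‖v‖ + 1 := by positivity
  have hcpos : 0 < c := by positivity
  have hmem : y - c • v ∈ K := by
    apply hball
    simp only [Metric.mem_ball, dist_eq_norm]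
    have : y - c • v - y = -(c • v) := by abel
    rw [this, norm_neg, norm_smul, Real.norm_eq_abs, abs_of_pos hcpos]
    calc c * ‖v‖ ≤ c * (‖v‖ + 1) := by nlinarith
      _ = ε / 2 := by rw [hc]; field_simp
      _ < ε := by linarith
  have hdual : ∀ w ∈ K, 0 ≤ w ⬝ᵥ v := by
    intro w hw
    rw [hsd] at hw
    exact hw v hv
  have h1 := hdual _ hmem
  rw [sub_dotProduct, smul_dotProduct, sub_nonneg] at h1
  have hvv : 0 < v ⬝ᵥ v := by
    have : v ⬝ᵥ v = ∑ i, (v i)^2 := by simp [dotProduct, sq]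
    rw [this]
    apply Finset.sum_pos'
    · intro i _; positivity
    · obtain ⟨i, hi⟩ := Function.ne_iff.mp hv0
      exact ⟨i, Finset.mem_univ i, pow_pos (abs_pos.mpr hi) 2 |>.trans_le (by rw [sq_abs])⟩
  calc (0:ℝ) < c * (v ⬝ᵥ v) := mul_pos hcpos hvv
    _ ≤ y ⬝ᵥ v := h1

lemma exists_pos_eigenvalue {n : ℕ} {Q : Matrix (Fin n) (Fin n) ℝ} (hsymm : Q.IsHermitian)
    (h : posEigCount Q = 1) : ∃ v : Fin n → ℝ, v ≠ 0 ∧ ∃ t : ℝ, 0 < t ∧ Q *ᵥ v = t • v := by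
  rw [posEigCount, dif_pos hsymm] at h
  have : (Finset.univ.filter fun i => 0 < hsymm.eigenvalues i).Nonempty := by
    rw [← Finset.card_pos, h]; norm_num
  obtain ⟨i, hi⟩ := this
  rw [Finset.mem_filter] at hi
  refine ⟨hsymm.eigenvectorBasis i, fun h => hsymm.eigenvectorBasis.orthonormal.ne_zero i (by ext j; simpa using congrFun h j),
    hsymm.eigenvalues i, hi.2, hsymm.mulVec_eigenvectorBasis i⟩

/-- Let `K ⊆ ℝⁿ` be a self-dual proper convex cone. A quadratic form
`q(x) = xᵀQx` with real symmetric matrix `Q` is `K`-Lorentzian if and only if `Q` has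
exactly one positive eigenvalue and `Q` is `K`-nonnegative, i.e. `Q(K) ⊆ K`. -/
theorem stmt4 {n : ℕ} (K : Set (Fin n → ℝ)) (hK : IsProperCone K) (hsd : K = dualConeSet K)
    (Q : Matrix (Fin n) (Fin n) ℝ) (hsymm : Q.IsHermitian) :
    IsLorentzianMatrix K Q ↔ (posEigCount Q = 1 ∧ ∀ x ∈ K, Q *ᵥ x ∈ K) := by
  obtain ⟨hconv, hcone, hclosed, hpointed, e, he⟩ := hK
  constructor
  · rintro ⟨h1, h2⟩
    refine ⟨h1, fun x hx => ?_⟩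
    rw [hsd]
    intro z hz
    -- limit argument
    set f : ℝ → ℝ := fun t =>
      ((1-t) • z + t • e) ⬝ᵥ (Q *ᵥ ((1-t) • x + t • e)) with hf
    have hcont : Continuous f := by
      simp only [hf, dotProduct, mulVec, dotProduct]
      fun_prop
    have hf0 : f 0 = z ⬝ᵥ (Q *ᵥ x) := by simp [hf]
    have hpos : ∀ t ∈ Set.Ioo (0:ℝ) 1, 0 < f t := by
      intro t ht
      have h1t : (0:ℝ) ≤ 1 - t := by linarith [ht.2]
      have hxt : (1-t) • x + t • e ∈ interior K :=
        hconv.combo_self_interior_mem_interior hx he h1t ht.1 (by ring)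
      have hzt : (1-t) • z + t • e ∈ interior K :=
        hconv.combo_self_interior_mem_interior hz he h1t ht.1 (by ring)
      exact h2 _ hxt _ hzt
    rw [dotProduct_comm, ← hf0]
    have htend : Filter.Tendsto f (nhdsWithin 0 (Set.Ioi 0)) (nhds (f 0)) :=
      (hcont.tendsto 0).mono_left nhdsWithin_le_nhds
    refine ge_of_tendsto htend ?_
    filter_upwards [Ioo_mem_nhdsGT_of_mem (Set.mem_Ico.mpr ⟨le_refl (0:ℝ), one_pos⟩)] with t ht
    exact (hpos t ht).le
  · rintro ⟨h1, h2⟩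
    refine ⟨h1, fun x hx y hy => ?_⟩
    have hxK : x ∈ K := interior_subset hx
    have hQx : Q *ᵥ x ∈ K := h2 x hxK
    by_cases hQx0 : Q *ᵥ x = 0
    · exfalso
      obtain ⟨u, hu0, t, ht, hQu⟩ := exists_pos_eigenvalue hsymm h1
      obtain ⟨ε, hε, hball⟩ := Metric.mem_nhds_iff.mp (mem_interior_iff_mem_nhds.mp hx)
      set c : ℝ := ε / (2 * (‖u‖ + 1)) with hc
      have hcpos : 0 < c := by positivity
      have hnorm : ‖c • u‖ < ε := by
        rw [norm_smul, Real.norm_eq_abs, abs_of_pos hcpos]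
        have : c * ‖u‖ ≤ c * (‖u‖ + 1) := by nlinarith [norm_nonneg u]
        have heq : c * (‖u‖ + 1) = ε / 2 := by
          rw [hc]; field_simp
        linarith
      have hmem1 : x + c • u ∈ K := by
        apply hball; simp only [Metric.mem_ball, dist_eq_norm]
        have : x + c • u - x = c • u := by abel
        rw [this]; exact hnorm
      have hmem2 : x - c • u ∈ K := by
        apply hball; simp only [Metric.mem_ball, dist_eq_norm]
        have : x - c • u - x = -(c • u) := by abel
        rw [this, norm_neg]; exact hnorm
      have hQ1 : Q *ᵥ (x + c • u) = (c * t) • u := by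
        rw [mulVec_add, hQx0, zero_add, mulVec_smul, hQu, smul_smul]
      have hQ2 : Q *ᵥ (x - c • u) = -((c * t) • u) := by
        rw [sub_eq_add_neg, mulVec_add, hQx0, zero_add, mulVec_neg, mulVec_smul, hQu,
          smul_smul]
      have hk1 : (c * t) • u ∈ K := hQ1 ▸ h2 _ hmem1
      have hk2 : -((c * t) • u) ∈ K := hQ2 ▸ h2 _ hmem2
      have : (c * t) • u ∈ K ∩ (-K) := ⟨hk1, by simpa using hk2⟩
      rw [hpointed] at this
      have hct : c * t ≠ 0 := by positivity
      exact hu0 (by simpa [hct] using this)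
    · exact interior_dot_pos hsd hy hQx hQx0
end

section
/- Let q be a quadratic form on the space S^n of real symmetric n×n matrices whose matrix Q (with respect to the trace inner product) is nonsingular and has exactly one positive eigenvalue (counted with multiplicity). Then q is S^n_+-Lorentzian if and only if the quartic polynomial x ↦ q(xxᵀ) is nonnegative for all x ∈ ℝ^n. -/
open Matrix

/-- The space `Sⁿ` of real symmetric `n × n` matrices, as a submodule of all matrices. -/
def symMat (n : ℕ) : Submodule ℝ (Matrix (Fin n) (Fin n) ℝ) where
  carrier := {A | A.IsSymm}
  add_mem' := fun ha hb => ha.add hb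
  zero_mem' := Matrix.isSymm_zero
  smul_mem' := fun c _ hA => hA.smul c

/-- The quadratic form `q(A) = ⟨A, T A⟩ = tr (A · T A)` on `Sⁿ` associated with the linear
map `T : Sⁿ → Sⁿ` (the matrix of `q` with respect to the trace inner product is the matrix
of `T`). -/
noncomputable def qformS {n : ℕ} (T : ↥(symMat n) →ₗ[ℝ] ↥(symMat n)) (A : ↥(symMat n)) :
    ℝ :=
  ((A : Matrix (Fin n) (Fin n) ℝ) * ((T A : ↥(symMat n)) : Matrix (Fin n) (Fin n) ℝ)).trace

/-- `T` is self-adjoint with respect to the trace inner product on `Sⁿ`, i.e. the matrix of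
the quadratic form `qformS T` is symmetric. -/
def IsSelfAdjointTrace {n : ℕ} (T : ↥(symMat n) →ₗ[ℝ] ↥(symMat n)) : Prop :=
  ∀ A B : ↥(symMat n),
    (((T A : ↥(symMat n)) : Matrix (Fin n) (Fin n) ℝ) * (B : Matrix (Fin n) (Fin n) ℝ)).trace
      = ((A : Matrix (Fin n) (Fin n) ℝ) * ((T B : ↥(symMat n)) : Matrix (Fin n) (Fin n) ℝ)).trace

/-- The (self-adjoint) map `T` has exactly one positive eigenvalue, counted with
multiplicity, expressed variationally: the associated quadratic form is positive somewhere,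
and every two-dimensional subspace contains a nonzero vector where it is nonpositive. -/
def HasExactlyOnePosEig {n : ℕ} (T : ↥(symMat n) →ₗ[ℝ] ↥(symMat n)) : Prop :=
  (∃ A : ↥(symMat n), 0 < qformS T A) ∧
    ∀ W : Submodule ℝ ↥(symMat n), Module.finrank ℝ ↥W = 2 →
      ∃ v ∈ W, v ≠ 0 ∧ qformS T v ≤ 0

/-- The cone `Sⁿ₊` of positive semidefinite matrices inside `Sⁿ`. -/
def PSDcone (n : ℕ) : Set ↥(symMat n) :=
  {A | Matrix.PosSemidef (A : Matrix (Fin n) (Fin n) ℝ)}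

/-- The quadratic form on `Sⁿ` associated with `T` is `Sⁿ₊`-Lorentzian: its matrix has
exactly one positive eigenvalue and `⟨Y, T X⟩ > 0` for all `X, Y` in the interior of `Sⁿ₊`. -/
def IsLorentzianPSD {n : ℕ} (T : ↥(symMat n) →ₗ[ℝ] ↥(symMat n)) : Prop :=
  HasExactlyOnePosEig T ∧
    ∀ X ∈ interior (PSDcone n), ∀ Y ∈ interior (PSDcone n),
      0 < ((Y : Matrix (Fin n) (Fin n) ℝ) *
            ((T X : ↥(symMat n)) : Matrix (Fin n) (Fin n) ℝ)).trace

/-- The rank-one symmetric matrix `xxᵀ` as an element of `Sⁿ`. -/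
def rankOneSym {n : ℕ} (x : Fin n → ℝ) : ↥(symMat n) :=
  ⟨Matrix.vecMulVec x x, by
    show (Matrix.vecMulVec x x)ᵀ = Matrix.vecMulVec x x
    ext i j
    simp [Matrix.vecMulVec_apply, mul_comm]⟩

namespace Stmt6Aux

variable {n : ℕ} {T : ↥(symMat n) →ₗ[ℝ] ↥(symMat n)}

noncomputable def Bf (T : ↥(symMat n) →ₗ[ℝ] ↥(symMat n)) (A C : ↥(symMat n)) : ℝ :=
  ((A : Matrix (Fin n) (Fin n) ℝ) * ((T C : ↥(symMat n)) : Matrix (Fin n) (Fin n) ℝ)).trace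

lemma q_eq (T : ↥(symMat n) →ₗ[ℝ] ↥(symMat n)) (A : ↥(symMat n)) : qformS T A = Bf T A A := rfl

lemma Bf_symm (hsa : IsSelfAdjointTrace T) (A C : ↥(symMat n)) : Bf T A C = Bf T C A := by
  unfold Bf; rw [← hsa A C, Matrix.trace_mul_comm]

lemma Bf_add_left (A A' C : ↥(symMat n)) : Bf T (A + A') C = Bf T A C + Bf T A' C := by
  simp [Bf, add_mul]

lemma Bf_add_right (A C C' : ↥(symMat n)) : Bf T A (C + C') = Bf T A C + Bf T A C' := by
  simp [Bf, mul_add]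

lemma Bf_smul_left (c : ℝ) (A C : ↥(symMat n)) : Bf T (c • A) C = c * Bf T A C := by
  simp [Bf, Matrix.smul_mul]

lemma Bf_smul_right (c : ℝ) (A C : ↥(symMat n)) : Bf T A (c • C) = c * Bf T A C := by
  simp [Bf, Matrix.mul_smul]

lemma Bf_zero_left (C : ↥(symMat n)) : Bf T 0 C = 0 := by simp [Bf]

lemma Bf_zero_right (A : ↥(symMat n)) : Bf T A 0 = 0 := by simp [Bf]

lemma Bf_sub_left (A A' C : ↥(symMat n)) : Bf T (A - A') C = Bf T A C - Bf T A' C := by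
  simp [Bf, sub_mul]

lemma Bf_sub_right (A C C' : ↥(symMat n)) : Bf T A (C - C') = Bf T A C - Bf T A C' := by
  simp [Bf, mul_sub]

lemma q_add (hsa : IsSelfAdjointTrace T) (A C : ↥(symMat n)) :
    qformS T (A + C) = qformS T A + 2 * Bf T A C + qformS T C := by
  simp only [q_eq, Bf_add_left, Bf_add_right, Bf_symm hsa C A]; ring

lemma q_smul (c : ℝ) (A : ↥(symMat n)) : qformS T (c • A) = c ^ 2 * qformS T A := by
  simp only [q_eq, Bf_smul_left, Bf_smul_right]; ring

lemma q_zero : qformS T 0 = 0 := by simp [q_eq, Bf_zero_left]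


lemma Bf_nondeg (hns : Function.Injective T) (w : ↥(symMat n))
    (h : ∀ Z : ↥(symMat n), Bf T Z w = 0) : w = 0 := by
  have hTw : T w = 0 := by
    have h1 := h (T w)
    unfold Bf at h1
    set M : Matrix (Fin n) (Fin n) ℝ := ((T w : ↥(symMat n)) : Matrix (Fin n) (Fin n) ℝ) with hM
    have hMs : M.IsSymm := (T w).2
    have htr : (M * M).trace = ∑ i, ∑ j, (M i j) ^ 2 := by
      rw [Matrix.trace]
      congr 1; ext i
      rw [Matrix.diag_apply, Matrix.mul_apply]
      congr 1; ext j
      have hsym : M j i = M i j := by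
        conv_lhs => rw [← hMs]
        rfl
      rw [hsym]; ring
    rw [htr] at h1
    have hz : ∀ i ∈ Finset.univ, ∀ j ∈ Finset.univ, (M i j) ^ 2 = 0 := by
      have hnn : ∀ i ∈ (Finset.univ : Finset (Fin n)), 0 ≤ ∑ j, (M i j) ^ 2 :=
        fun i _ => Finset.sum_nonneg fun j _ => sq_nonneg _
      have h2 := (Finset.sum_eq_zero_iff_of_nonneg hnn).mp h1
      intro i hi j hj
      exact (Finset.sum_eq_zero_iff_of_nonneg (fun j _ => sq_nonneg (M i j))).mp (h2 i hi) j hj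
    have hM0 : M = 0 := by
      ext i j
      exact pow_eq_zero_iff (by norm_num) |>.mp (hz i (Finset.mem_univ i) j (Finset.mem_univ j))
    exact Subtype.ext hM0
  exact hns (hTw.trans (map_zero T).symm)

lemma rankOneSym_neg (x : Fin n → ℝ) : rankOneSym (-x) = rankOneSym x := by
  apply Subtype.ext
  show Matrix.vecMulVec (-x) (-x) = Matrix.vecMulVec x x
  ext i j
  simp [Matrix.vecMulVec_apply]

lemma rankOneSym_zero : rankOneSym (0 : Fin n → ℝ) = 0 := by
  apply Subtype.ext
  show Matrix.vecMulVec 0 0 = 0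
  ext i j
  simp [Matrix.vecMulVec_apply]

lemma rankOneSym_ne_zero {x : Fin n → ℝ} (hx : x ≠ 0) : rankOneSym x ≠ 0 := by
  obtain ⟨i, hi⟩ := Function.ne_iff.mp hx
  intro h
  have h2 := congrFun (congrFun (congrArg Subtype.val h) i) i
  simp only [Submodule.coe_zero, Matrix.zero_apply] at h2
  rw [show (rankOneSym x).val i i = x i * x i from rfl] at h2
  exact hi (by simpa using mul_self_eq_zero.mp (by simpa using h2))

section Nappe
variable (hsa : IsSelfAdjointTrace T) (heig : HasExactlyOnePosEig T)
variable {e : ↥(symMat n)} (he : 0 < qformS T e)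

include hsa heig he

/-- On the `B`-orthogonal complement of `e`, the form is nonpositive. -/
lemma orth_nonpos (w : ↥(symMat n)) (hw : Bf T e w = 0) : qformS T w ≤ 0 := by
  by_contra hq
  push_neg at hq
  have hw0 : w ≠ 0 := by rintro rfl; rw [q_zero] at hq; exact lt_irrefl 0 hq
  have hind : LinearIndependent ℝ ![e, w] := by
    rw [LinearIndependent.pair_iff]
    intro s t hst
    have h1 : Bf T e (s • e + t • w) = 0 := by rw [hst, Bf_zero_right]
    rw [Bf_add_right, Bf_smul_right, Bf_smul_right, ← q_eq, hw] at h1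
    have hs : s = 0 := by
      rcases mul_eq_zero.mp (by linarith : s * qformS T e = 0) with h | h
      · exact h
      · exact absurd h (ne_of_gt he)
    refine ⟨hs, ?_⟩
    rw [hs, zero_smul, zero_add] at hst
    rcases smul_eq_zero.mp hst with h | h
    · exact h
    · exact absurd h hw0
  set W : Submodule ℝ ↥(symMat n) := Submodule.span ℝ (Set.range ![e, w]) with hW
  have hrank : Module.finrank ℝ ↥W = 2 := by
    rw [hW, finrank_span_eq_card hind]
    simp
  obtain ⟨v, hvW, hv0, hvq⟩ := heig.2 W hrank
  have hrange : Set.range ![e, w] = {e, w} := by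
    ext z; simp only [Matrix.range_cons, Matrix.range_empty, Set.union_empty,
      Set.union_singleton, Set.mem_insert_iff, Set.mem_singleton_iff]
    tauto
  rw [hW, hrange, Submodule.mem_span_pair] at hvW
  obtain ⟨a, b, hab⟩ := hvW
  have hqv : qformS T v = a ^ 2 * qformS T e + b ^ 2 * qformS T w := by
    rw [← hab, q_add hsa, q_smul, q_smul, Bf_smul_left, Bf_smul_right, hw]
    ring
  have hab0 : ¬(a = 0 ∧ b = 0) := by
    rintro ⟨rfl, rfl⟩
    simp at hab
    exact hv0 hab.symm
  have : 0 < qformS T v := by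
    rw [hqv]
    rcases eq_or_ne a 0 with ha | ha
    · have hb : b ≠ 0 := fun hb => hab0 ⟨ha, hb⟩
      have hb2 : 0 < b ^ 2 := pow_pos (abs_pos.mpr hb) 2 |>.trans_eq (sq_abs b)
      nlinarith [sq_nonneg a]
    · have ha2 : 0 < a ^ 2 := pow_pos (abs_pos.mpr ha) 2 |>.trans_eq (sq_abs a)
      nlinarith [sq_nonneg b]
  linarith

/-- Cauchy–Schwarz on the orthogonal complement of `e` (where the form is nonpositive). -/
lemma CS_orth (w z : ↥(symMat n)) (hw : Bf T e w = 0) (hz : Bf T e z = 0) :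
    (Bf T w z) ^ 2 ≤ qformS T w * qformS T z := by
  have key : ∀ t : ℝ, 0 ≤ (- qformS T z) * (t * t) + (- (2 * Bf T w z)) * t + (- qformS T w) := by
    intro t
    have hmem : Bf T e (w + t • z) = 0 := by
      rw [Bf_add_right, Bf_smul_right, hw, hz]; ring
    have := orth_nonpos hsa heig he (w + t • z) hmem
    rw [q_add hsa, q_smul, Bf_smul_right] at this
    nlinarith [this]
  have hd := discrim_le_zero key
  rw [discrim] at hd
  nlinarith [hd]

set_option maxHeartbeats 1000000 in
/-- In the nappe `N = {w : q w ≥ 0, B e w ≥ 0}` the bilinear form is nonnegative,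
and positive on the strict part. -/
lemma nappe_bf_nonneg (w₁ w₂ : ↥(symMat n))
    (hq₁ : 0 ≤ qformS T w₁) (hq₂ : 0 ≤ qformS T w₂)
    (hb₁ : 0 ≤ Bf T e w₁) (hb₂ : 0 ≤ Bf T e w₂) :
    0 ≤ Bf T w₁ w₂ ∧ ((0 < qformS T w₁ ∧ 0 < qformS T w₂) → 0 < Bf T w₁ w₂) := by
  have heq : qformS T e ≠ 0 := ne_of_gt he
  set qe := qformS T e with hqe
  set t₁ : ℝ := Bf T e w₁ / qe with ht₁
  set t₂ : ℝ := Bf T e w₂ / qe with ht₂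
  have ht₁n : 0 ≤ t₁ := div_nonneg hb₁ (le_of_lt he)
  have ht₂n : 0 ≤ t₂ := div_nonneg hb₂ (le_of_lt he)
  set w₁' := w₁ - t₁ • e with hw₁'
  set w₂' := w₂ - t₂ • e with hw₂'
  clear_value qe t₁ t₂ w₁' w₂'
  have heQ : 0 < qformS T e := by rw [← hqe]; exact he
  have horth : ∀ (t : ℝ) (w : ↥(symMat n)), t = Bf T e w / qe → Bf T e (w - t • e) = 0 := by
    intro t w ht
    rw [Bf_sub_right, Bf_smul_right, ← q_eq, ← hqe, ht]
    field_simp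
    ring
  have ho₁ : Bf T e w₁' = 0 := by rw [hw₁']; exact horth t₁ w₁ ht₁
  have ho₂ : Bf T e w₂' = 0 := by rw [hw₂']; exact horth t₂ w₂ ht₂
  have hdecomp : ∀ (t : ℝ) (w : ↥(symMat n)), qformS T (w - t • e)
      = qformS T w - 2 * t * Bf T e w + t ^ 2 * qe := by
    intro t w
    have : w - t • e = w + (-t) • e := by module
    rw [this, q_add hsa, Bf_smul_right, q_smul, Bf_symm hsa w e, hqe]
    ring
  have hq₁' : qformS T w₁' = qformS T w₁ - t₁ ^ 2 * qe := by
    rw [hw₁', hdecomp t₁ w₁, ht₁]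
    field_simp
    ring
  have hq₂' : qformS T w₂' = qformS T w₂ - t₂ ^ 2 * qe := by
    rw [hw₂', hdecomp t₂ w₂, ht₂]
    field_simp
    ring
  have hCS : (Bf T w₁' w₂') ^ 2 ≤ qformS T w₁' * qformS T w₂' :=
    CS_orth hsa heig heQ w₁' w₂' ho₁ ho₂
  have hn₁ : qformS T w₁' ≤ 0 := orth_nonpos hsa heig heQ w₁' ho₁
  have hn₂ : qformS T w₂' ≤ 0 := orth_nonpos hsa heig heQ w₂' ho₂
  -- expand B w₁ w₂
  have hexp : Bf T w₁ w₂ = Bf T w₁' w₂' + t₁ * t₂ * qe := by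
    have h1 : w₁ = w₁' + t₁ • e := by rw [hw₁']; module
    have h2 : w₂ = w₂' + t₂ • e := by rw [hw₂']; module
    conv_lhs => rw [h1, h2]
    rw [Bf_add_left, Bf_add_right, Bf_add_right, Bf_smul_left, Bf_smul_right,
      Bf_smul_left, Bf_smul_right, ho₂, Bf_symm hsa w₁' e, ho₁, ← q_eq, ← hqe]
    ring
  have hb₁q : - qformS T w₁' ≤ t₁ ^ 2 * qe := by rw [hq₁']; linarith
  have hb₂q : - qformS T w₂' ≤ t₂ ^ 2 * qe := by rw [hq₂']; linarith
  have hKK : qformS T w₁' * qformS T w₂' ≤ (t₁ ^ 2 * qe) * (t₂ ^ 2 * qe) := by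
    nlinarith [neg_nonneg.mpr hn₁, neg_nonneg.mpr hn₂,
      mul_nonneg (mul_nonneg (sq_nonneg t₁) (le_of_lt he)) (neg_nonneg.mpr hn₂)]
  constructor
  · -- nonneg
    rw [hexp]
    have hsq : (Bf T w₁' w₂') ^ 2 ≤ (t₁ * t₂ * qe) ^ 2 := by
      calc (Bf T w₁' w₂') ^ 2 ≤ qformS T w₁' * qformS T w₂' := hCS
        _ ≤ (t₁ ^ 2 * qe) * (t₂ ^ 2 * qe) := hKK
        _ = (t₁ * t₂ * qe) ^ 2 := by ring
    have hKn : 0 ≤ t₁ * t₂ * qe := mul_nonneg (mul_nonneg ht₁n ht₂n) (le_of_lt he)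
    nlinarith [sq_nonneg (Bf T w₁' w₂' + t₁ * t₂ * qe)]
  · rintro ⟨hs₁, hs₂⟩
    have ht₁p : 0 < t₁ := by
      rcases ht₁n.lt_or_eq with h | h
      · exact h
      · exfalso
        have : Bf T e w₁ = 0 := by
          have := h.symm
          rw [ht₁] at this
          field_simp at this
          simpa using this
        have := orth_nonpos hsa heig heQ w₁ this
        linarith
    have ht₂p : 0 < t₂ := by
      rcases ht₂n.lt_or_eq with h | h
      · exact h
      · exfalso
        have : Bf T e w₂ = 0 := by
          have := h.symm
          rw [ht₂] at this
          field_simp at this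
          simpa using this
        have := orth_nonpos hsa heig heQ w₂ this
        linarith
    have hstrict₁ : - qformS T w₁' < t₁ ^ 2 * qe := by rw [hq₁']; linarith
    have hstrict₂ : - qformS T w₂' < t₂ ^ 2 * qe := by rw [hq₂']; linarith
    have hprod : qformS T w₁' * qformS T w₂' < (t₁ ^ 2 * qe) * (t₂ ^ 2 * qe) := by
      have h1 : (0:ℝ) ≤ - qformS T w₁' := neg_nonneg.mpr hn₁
      have h2 : (0:ℝ) ≤ - qformS T w₂' := neg_nonneg.mpr hn₂
      have hA : 0 < t₁ ^ 2 * qe := mul_pos (pow_pos ht₁p 2) he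
      have hB : 0 < t₂ ^ 2 * qe := mul_pos (pow_pos ht₂p 2) he
      nlinarith
    rw [hexp]
    have hsq : (Bf T w₁' w₂') ^ 2 < (t₁ * t₂ * qe) ^ 2 := by
      calc (Bf T w₁' w₂') ^ 2 ≤ qformS T w₁' * qformS T w₂' := hCS
        _ < (t₁ ^ 2 * qe) * (t₂ ^ 2 * qe) := hprod
        _ = (t₁ * t₂ * qe) ^ 2 := by ring
    have hpos : 0 < t₁ * t₂ * qe := mul_pos (mul_pos ht₁p ht₂p) he
    nlinarith [sq_nonneg (Bf T w₁' w₂' + t₁ * t₂ * qe)]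


/-- A vector on the light cone orthogonal to `e` is zero. -/
lemma lightcone_orth_zero (hns : Function.Injective T) (w : ↥(symMat n))
    (hqw : 0 ≤ qformS T w) (hbw : Bf T e w = 0) : w = 0 := by
  have hqw' : qformS T w ≤ 0 := orth_nonpos hsa heig he w hbw
  have hqw0 : qformS T w = 0 := le_antisymm hqw' hqw
  apply Bf_nondeg hns
  intro Z
  set s : ℝ := Bf T e Z / qformS T e with hs
  set Z' := Z - s • e with hZ'
  have hoZ : Bf T e Z' = 0 := by
    rw [hZ', Bf_sub_right, Bf_smul_right, ← q_eq, hs]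
    field_simp
    ring
  have hCS := CS_orth hsa heig he w Z' hbw hoZ
  rw [hqw0] at hCS
  have hBwz : Bf T w Z' = 0 := by nlinarith [sq_nonneg (Bf T w Z')]
  have hZdec : Z = Z' + s • e := by rw [hZ']; module
  rw [Bf_symm hsa Z w, hZdec, Bf_add_right, Bf_smul_right, hBwz, Bf_symm hsa w e, hbw]
  ring

omit hsa heig he in
/-- choice of a segment avoiding the origin -/
lemma seg_choice (x₀ x₁ : Fin n → ℝ) (h₀ : x₀ ≠ 0) (h₁ : x₁ ≠ 0) :
    (∀ t ∈ Set.Icc (0:ℝ) 1, (1 - t) • x₀ + t • x₁ ≠ 0) ∨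
    (∀ t ∈ Set.Icc (0:ℝ) 1, (1 - t) • x₀ + t • (-x₁) ≠ 0) := by
  by_contra hcon
  push_neg at hcon
  obtain ⟨⟨t, ht, et⟩, ⟨s, hs, es⟩⟩ := hcon
  set c : ℝ := s * (1 - t) + t * (1 - s) with hc
  have hcx : c • x₀ = 0 := by
    have hkey : c • x₀ = s • ((1 - t) • x₀ + t • x₁) + t • ((1 - s) • x₀ + s • (-x₁)) := by
      module
    rw [hkey, et, es]
    simp
  rcases eq_or_ne c 0 with hc0 | hc0
  · have h1 : s * (1 - t) = 0 := by nlinarith [ht.1, ht.2, hs.1, hs.2, mul_nonneg hs.1 (by linarith [ht.2] : (0:ℝ) ≤ 1 - t), mul_nonneg ht.1 (by linarith [hs.2] : (0:ℝ) ≤ 1 - s)]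
    rcases mul_eq_zero.mp h1 with h | h
    · subst h
      simp only [sub_zero, one_smul, zero_smul, add_zero] at es
      exact h₀ es
    · have htt : t = 1 := by linarith
      subst htt
      simp only [sub_self, zero_smul, one_smul, zero_add] at et
      exact h₁ et
  · exact h₀ (by simpa [hc0] using (smul_eq_zero.mp hcx))

omit hsa heig he in
/-- continuity of the quartic along rank-one matrices -/
lemma h_cont : Continuous (fun x : Fin n → ℝ => Bf T e (rankOneSym x)) := by
  have hT : Continuous T := T.continuous_of_finiteDimensional
  have h1 : Continuous (fun A : ↥(symMat n) => Bf T e A) :=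
    (Continuous.matrix_mul continuous_const (continuous_subtype_val.comp hT)).matrix_trace
  have h2 : Continuous (fun x : Fin n → ℝ => rankOneSym x) := by
    apply Continuous.subtype_mk
    exact continuous_matrix fun i j => (continuous_apply i).mul (continuous_apply j)
  exact h1.comp h2

/-- the sign of `B(e, xxᵀ)` is constant -/
lemma rankone_dichotomy (hns : Function.Injective T)
    (hq : ∀ x : Fin n → ℝ, 0 ≤ qformS T (rankOneSym x)) :
    (∀ x, 0 ≤ Bf T e (rankOneSym x)) ∨ (∀ x, Bf T e (rankOneSym x) ≤ 0) := by
  have hcont : Continuous (fun x : Fin n → ℝ => Bf T e (rankOneSym x)) :=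
    h_cont (T := T) (e := e)
  have hne : ∀ x : Fin n → ℝ, x ≠ 0 → Bf T e (rankOneSym x) ≠ 0 := by
    intro x hx h0
    exact rankOneSym_ne_zero hx (lightcone_orth_zero hsa heig he hns (rankOneSym x) (hq x) h0)
  by_contra hcon
  push_neg at hcon
  obtain ⟨⟨x₁, hx₁⟩, ⟨x₀, hx₀⟩⟩ := hcon
  have hx₁0 : x₁ ≠ 0 := by
    rintro rfl
    rw [rankOneSym_zero, Bf_zero_right] at hx₁
    exact absurd hx₁ (lt_irrefl 0)
  have hx₀0 : x₀ ≠ 0 := by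
    rintro rfl
    rw [rankOneSym_zero, Bf_zero_right] at hx₀
    exact absurd hx₀ (lt_irrefl 0)
  have hIVT : ∀ y : Fin n → ℝ, 0 < Bf T e (rankOneSym y) →
      (∀ t ∈ Set.Icc (0:ℝ) 1, (1 - t) • x₁ + t • y ≠ 0) → False := by
    intro y hy hseg
    set g : ℝ → ℝ := fun t => Bf T e (rankOneSym ((1 - t) • x₁ + t • y)) with hg
    have hgc : Continuous g := by
      apply hcont.comp
      exact ((continuous_const.sub continuous_id).smul continuous_const).add
        (continuous_id.smul continuous_const)
    have hsub := intermediate_value_Icc (by norm_num : (0:ℝ) ≤ 1) hgc.continuousOn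
    have h0mem : (0:ℝ) ∈ Set.Icc (g 0) (g 1) := by
      constructor
      · show g 0 ≤ 0
        have : g 0 = Bf T e (rankOneSym x₁) := by rw [hg]; norm_num
        rw [this]; exact le_of_lt hx₁
      · show (0:ℝ) ≤ g 1
        have : g 1 = Bf T e (rankOneSym y) := by rw [hg]; norm_num
        rw [this]; exact le_of_lt hy
    obtain ⟨t, htI, hgt⟩ := hsub h0mem
    exact hne _ (hseg t htI) hgt
  rcases seg_choice x₁ x₀ hx₁0 hx₀0 with hseg | hseg
  · exact hIVT x₀ hx₀ hseg
  · refine hIVT (-x₀) ?_ hseg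
    rw [rankOneSym_neg]
    exact hx₀

/-- the nappe is closed under finite sums -/
lemma nappe_sum {ι : Type*} (s : Finset ι) (f : ι → ↥(symMat n))
    (hf : ∀ i ∈ s, 0 ≤ qformS T (f i) ∧ 0 ≤ Bf T e (f i)) :
    0 ≤ qformS T (∑ i ∈ s, f i) ∧ 0 ≤ Bf T e (∑ i ∈ s, f i) := by
  classical
  induction s using Finset.induction with
  | empty => simp [q_zero, Bf_zero_right]
  | @insert a s ha ih =>
    have hfa := hf a (Finset.mem_insert_self a s)
    have hrest := ih fun i hi => hf i (Finset.mem_insert_of_mem hi)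
    rw [Finset.sum_insert ha]
    constructor
    · rw [q_add hsa]
      have hB := (nappe_bf_nonneg hsa heig he (f a) (∑ i ∈ s, f i)
        hfa.1 hrest.1 hfa.2 hrest.2).1
      linarith [hfa.1, hrest.1]
    · rw [Bf_add_right]
      linarith [hfa.2, hrest.2]

end Nappe


lemma isSymm_isHermitian {M : Matrix (Fin n) (Fin n) ℝ} (h : M.IsSymm) : M.IsHermitian := by
  unfold Matrix.IsHermitian
  rw [conjTranspose_eq_transpose_of_trivial]
  exact h

lemma dotProduct_self_nonneg (v : Fin n → ℝ) : 0 ≤ v ⬝ᵥ v :=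
  Finset.sum_nonneg fun i _ => mul_self_nonneg _

lemma dotProduct_self_pos {v : Fin n → ℝ} (hv : v ≠ 0) : 0 < v ⬝ᵥ v := by
  rcases (dotProduct_self_nonneg v).lt_or_eq with h | h
  · exact h
  · exfalso
    apply hv
    ext i
    have := (Finset.sum_eq_zero_iff_of_nonneg (fun i (_ : i ∈ Finset.univ) => mul_self_nonneg (v i))).mp h.symm
    exact mul_self_eq_zero.mp (this i (Finset.mem_univ i))

/-- Positive definite matrices are interior points of the PSD cone in `Sⁿ`. -/
lemma posdef_mem_interior (hn : 0 < n) (X : ↥(symMat n))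
    (hX : Matrix.PosDef (X : Matrix (Fin n) (Fin n) ℝ)) : X ∈ interior (PSDcone n) := by
  classical
  -- the unit sphere
  set S : Set (Fin n → ℝ) := {x | x ⬝ᵥ x = 1} with hSdef
  have hcont_dp : Continuous fun x : Fin n → ℝ => x ⬝ᵥ x :=
    continuous_finset_sum _ fun i _ => (continuous_apply i).mul (continuous_apply i)
  have hSclosed : IsClosed S := isClosed_eq hcont_dp continuous_const
  have hSsub : S ⊆ Metric.closedBall 0 1 := by
    intro x hx
    rw [Metric.mem_closedBall, dist_zero_right]
    rw [pi_norm_le_iff_of_nonneg zero_le_one]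
    intro i
    rw [Real.norm_eq_abs, abs_le_one_iff_mul_self_le_one]
    calc x i * x i ≤ ∑ j, x j * x j :=
          Finset.single_le_sum (fun j _ => mul_self_nonneg (x j)) (Finset.mem_univ i)
      _ = 1 := hx
  have hScompact : IsCompact S :=
    (isCompact_closedBall (0 : Fin n → ℝ) 1).of_isClosed_subset hSclosed hSsub
  have hSne : S.Nonempty := by
    refine ⟨Pi.single (⟨0, hn⟩ : Fin n) 1, ?_⟩
    show _ ⬝ᵥ _ = 1
    simp [dotProduct, Pi.single_apply]
  have hgc : Continuous fun x : Fin n → ℝ => x ⬝ᵥ ((X : Matrix (Fin n) (Fin n) ℝ) *ᵥ x) := by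
    unfold dotProduct Matrix.mulVec
    exact continuous_finset_sum _ fun i _ => (continuous_apply i).mul
      (continuous_finset_sum _ fun j _ => continuous_const.mul (continuous_apply j))
  obtain ⟨x₀, hx₀S, hmin⟩ := hScompact.exists_isMinOn hSne hgc.continuousOn
  set m : ℝ := x₀ ⬝ᵥ ((X : Matrix (Fin n) (Fin n) ℝ) *ᵥ x₀) with hm
  have hx₀ne : x₀ ≠ 0 := by
    intro h
    rw [hSdef] at hx₀S
    simp only [Set.mem_setOf_eq, h] at hx₀S
    simp [zero_dotProduct] at hx₀S
  have hmpos : 0 < m := by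
    have := hX.dotProduct_mulVec_pos hx₀ne
    simpa using this
  -- the open set
  set F : ↥(symMat n) → ℝ := fun A =>
    ∑ i, ∑ j, |(A : Matrix (Fin n) (Fin n) ℝ) i j - (X : Matrix (Fin n) (Fin n) ℝ) i j| with hF
  have hFcont : Continuous F := by
    refine continuous_finset_sum _ fun i _ => continuous_finset_sum _ fun j _ => ?_
    refine Continuous.abs (Continuous.sub ?_ continuous_const)
    exact ((continuous_apply j).comp ((continuous_apply i).comp continuous_subtype_val))
  refine mem_interior.mpr ⟨F ⁻¹' Set.Iio m, ?_, hFcont.isOpen_preimage _ isOpen_Iio, ?_⟩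
  · intro A hA
    have hAF : F A < m := hA
    show Matrix.PosSemidef _
    set AM := (A : Matrix (Fin n) (Fin n) ℝ)
    refine Matrix.PosSemidef.of_dotProduct_mulVec_nonneg (isSymm_isHermitian A.2) ?_
    intro v
    rcases eq_or_ne v 0 with rfl | hv
    · simp
    · have hvv : 0 < v ⬝ᵥ v := dotProduct_self_pos hv
      set c : ℝ := Real.sqrt (v ⬝ᵥ v) with hc
      have hcpos : 0 < c := Real.sqrt_pos.mpr hvv
      set u : Fin n → ℝ := c⁻¹ • v with hu
      have huS : u ∈ S := by
        show u ⬝ᵥ u = 1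
        have hcc : c * c = v ⬝ᵥ v := Real.mul_self_sqrt (le_of_lt hvv)
        rw [hu, smul_dotProduct, dotProduct_smul, smul_eq_mul, smul_eq_mul]
        rw [← hcc]
        field_simp
      -- quadratic form at u is positive
      have hbound : |u ⬝ᵥ ((AM - (X : Matrix (Fin n) (Fin n) ℝ)) *ᵥ u)| ≤ F A := by
        have hui : ∀ i, |u i| ≤ 1 := by
          intro i
          rw [abs_le_one_iff_mul_self_le_one]
          calc u i * u i ≤ ∑ j, u j * u j :=
              Finset.single_le_sum (fun j _ => mul_self_nonneg (u j)) (Finset.mem_univ i)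
            _ = 1 := huS
        unfold dotProduct Matrix.mulVec
        calc |∑ i, u i * ∑ j, (AM - (X : Matrix (Fin n) (Fin n) ℝ)) i j * u j|
            ≤ ∑ i, |u i * ∑ j, (AM - (X : Matrix (Fin n) (Fin n) ℝ)) i j * u j| :=
              Finset.abs_sum_le_sum_abs _ _
          _ ≤ ∑ i, ∑ j, |(AM - (X : Matrix (Fin n) (Fin n) ℝ)) i j * u j| := by
              refine Finset.sum_le_sum fun i _ => ?_
              rw [abs_mul]
              calc |u i| * |∑ j, (AM - (X : Matrix (Fin n) (Fin n) ℝ)) i j * u j|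
                  ≤ 1 * |∑ j, (AM - (X : Matrix (Fin n) (Fin n) ℝ)) i j * u j| := by
                    exact mul_le_mul_of_nonneg_right (hui i) (abs_nonneg _)
                _ = |∑ j, (AM - (X : Matrix (Fin n) (Fin n) ℝ)) i j * u j| := one_mul _
                _ ≤ ∑ j, |(AM - (X : Matrix (Fin n) (Fin n) ℝ)) i j * u j| :=
                    Finset.abs_sum_le_sum_abs _ _
          _ ≤ F A := by
              refine Finset.sum_le_sum fun i _ => Finset.sum_le_sum fun j _ => ?_
              rw [abs_mul, Matrix.sub_apply]
              calc |AM i j - (X : Matrix (Fin n) (Fin n) ℝ) i j| * |u j|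
                  ≤ |AM i j - (X : Matrix (Fin n) (Fin n) ℝ) i j| * 1 :=
                    mul_le_mul_of_nonneg_left (hui j) (abs_nonneg _)
                _ = _ := mul_one _
      have hXu : m ≤ u ⬝ᵥ ((X : Matrix (Fin n) (Fin n) ℝ) *ᵥ u) := hmin huS
      have hupos : 0 < u ⬝ᵥ (AM *ᵥ u) := by
        have hsplit : u ⬝ᵥ (AM *ᵥ u)
            = u ⬝ᵥ ((X : Matrix (Fin n) (Fin n) ℝ) *ᵥ u)
              + u ⬝ᵥ ((AM - (X : Matrix (Fin n) (Fin n) ℝ)) *ᵥ u) := by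
          rw [← dotProduct_add, ← Matrix.add_mulVec]
          have hADD : (X : Matrix (Fin n) (Fin n) ℝ) + (AM - (X : Matrix (Fin n) (Fin n) ℝ)) = AM := by
            module
          rw [hADD]
        rw [hsplit]
        have habs := neg_abs_le (u ⬝ᵥ ((AM - (X : Matrix (Fin n) (Fin n) ℝ)) *ᵥ u))
        linarith
      have hvu : v = c • u := by
        rw [hu, smul_smul]
        field_simp
        rw [one_smul]
      have : v ⬝ᵥ (AM *ᵥ v) = c ^ 2 * (u ⬝ᵥ (AM *ᵥ u)) := by
        rw [hvu, smul_dotProduct, Matrix.mulVec_smul, dotProduct_smul]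
        simp [smul_eq_mul]; ring
      have hst : star v = v := star_trivial v
      rw [hst, this]
      positivity
  · show X ∈ F ⁻¹' Set.Iio m
    simp only [Set.mem_preimage, Set.mem_Iio, hF]
    simpa using hmpos

/-- interior points of the PSD cone are positive definite -/
lemma interior_posdef (X : ↥(symMat n)) (hX : X ∈ interior (PSDcone n)) :
    Matrix.PosDef (X : Matrix (Fin n) (Fin n) ℝ) := by
  have hmem0 : X ∈ PSDcone n := interior_subset hX
  have hPSD : Matrix.PosSemidef (X : Matrix (Fin n) (Fin n) ℝ) := hmem0
  refine Matrix.PosDef.of_dotProduct_mulVec_pos hPSD.1 ?_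
  intro v hv
  by_contra hcon
  have hv0 : v ⬝ᵥ ((X : Matrix (Fin n) (Fin n) ℝ) *ᵥ v) = 0 := by
    have h1 := hPSD.dotProduct_mulVec_nonneg v
    rw [star_trivial] at h1
    rw [star_trivial] at hcon
    exact le_antisymm (not_lt.mp hcon) h1
  -- perturb
  have hcont : Continuous (fun δ : ℝ => X - δ • rankOneSym v) :=
    continuous_const.sub (continuous_id.smul continuous_const)
  have h0 : (fun δ : ℝ => X - δ • rankOneSym v) 0 = X := by simp
  have hev : ∀ᶠ δ in nhds (0 : ℝ), (X - δ • rankOneSym v) ∈ interior (PSDcone n) := by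
    have hca := hcont.continuousAt (x := (0 : ℝ))
    rw [ContinuousAt] at hca
    simp only [zero_smul, sub_zero] at hca
    exact hca (isOpen_interior.mem_nhds hX)
  obtain ⟨ε, hε, hball⟩ := Metric.eventually_nhds_iff.mp hev
  set δ := ε / 2 with hδ
  have hδpos : 0 < δ := by positivity
  have hmem : (X - δ • rankOneSym v) ∈ interior (PSDcone n) := by
    apply hball
    rw [dist_zero_right, Real.norm_eq_abs, abs_of_pos hδpos]
    linarith
  have hmem1 : (X - δ • rankOneSym v) ∈ PSDcone n := interior_subset hmem
  have hPSD2 : Matrix.PosSemidef ((X - δ • rankOneSym v : ↥(symMat n)) : Matrix (Fin n) (Fin n) ℝ) :=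
    hmem1
  have h2 := hPSD2.dotProduct_mulVec_nonneg v
  rw [star_trivial] at h2
  have hval : ((X - δ • rankOneSym v : ↥(symMat n)) : Matrix (Fin n) (Fin n) ℝ)
      = (X : Matrix (Fin n) (Fin n) ℝ) - δ • Matrix.vecMulVec v v := rfl
  rw [hval] at h2
  rw [Matrix.sub_mulVec, dotProduct_sub] at h2
  have hvmv : v ⬝ᵥ ((δ • Matrix.vecMulVec v v) *ᵥ v) = δ * (v ⬝ᵥ v) ^ 2 := by
    rw [Matrix.smul_mulVec, dotProduct_smul]
    have : (Matrix.vecMulVec v v) *ᵥ v = (v ⬝ᵥ v) • v := by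
      ext i
      simp only [Matrix.mulVec, Matrix.vecMulVec_apply, dotProduct, Pi.smul_apply, smul_eq_mul]
      rw [Finset.sum_mul]
      exact Finset.sum_congr rfl fun j _ => by ring
    rw [this, dotProduct_smul]
    simp only [smul_eq_mul]
    ring
  rw [hvmv, hv0] at h2
  have hvvpos : 0 < v ⬝ᵥ v := by
    rcases (Finset.sum_nonneg fun i (_ : i ∈ Finset.univ) => mul_self_nonneg (v i)).lt_or_eq with h | h
    · exact h
    · exfalso; apply hv; ext i
      have := (Finset.sum_eq_zero_iff_of_nonneg (fun i (_ : i ∈ Finset.univ) => mul_self_nonneg (v i))).mp h.symm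
      exact mul_self_eq_zero.mp (this i (Finset.mem_univ i))
  nlinarith [mul_pos hδpos (pow_pos hvvpos 2)]


section
open scoped MatrixOrder
lemma matpsd_sum {A : Matrix (Fin n) (Fin n) ℝ} (hA : A.PosSemidef) :
    ∃ v : Fin n → Fin n → ℝ, A = ∑ j, Matrix.vecMulVec (v j) (v j) := by
  refine ⟨fun j i => CFC.sqrt A i j, ?_⟩
  have hA0 : 0 ≤ A := Matrix.nonneg_iff_posSemidef.mpr hA
  have hS : CFC.sqrt A * CFC.sqrt A = A := CFC.sqrt_mul_sqrt_self A hA0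
  have hSsym : (CFC.sqrt A).IsHermitian :=
    (Matrix.nonneg_iff_posSemidef.mp (CFC.sqrt_nonneg A)).1
  ext i k
  have key : (∑ j : Fin n, vecMulVec (fun i => CFC.sqrt A i j) fun i => CFC.sqrt A i j) i k
      = (CFC.sqrt A * CFC.sqrt A) i k := by
    rw [Matrix.mul_apply, Matrix.sum_apply]
    refine Finset.sum_congr rfl fun j _ => ?_
    rw [Matrix.vecMulVec_apply]
    have h3 := hSsym.apply j k
    rw [star_trivial] at h3
    rw [← h3]
  rw [hS] at key
  exact key.symm
end

lemma psd_sum {T : ↥(symMat n) →ₗ[ℝ] ↥(symMat n)} (Z : ↥(symMat n))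
    (h : Matrix.PosSemidef (Z : Matrix (Fin n) (Fin n) ℝ)) :
    ∃ v : Fin n → Fin n → ℝ, Z = ∑ j, rankOneSym (v j) := by
  obtain ⟨v, hv⟩ := matpsd_sum h
  refine ⟨v, Subtype.ext ?_⟩
  rw [hv]
  have : ((∑ j, rankOneSym (v j) : ↥(symMat n)) : Matrix (Fin n) (Fin n) ℝ)
      = ∑ j, ((rankOneSym (v j) : ↥(symMat n)) : Matrix (Fin n) (Fin n) ℝ) := by
    exact_mod_cast Submodule.coe_sum _ _ _
  rw [this]
  rfl

lemma eps_limit {a b c : ℝ} (h : ∀ ε : ℝ, 0 < ε → 0 < a + 2 * (ε * b) + ε ^ 2 * c) :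
    0 ≤ a := by
  by_contra hneg
  push_neg at hneg
  have hd : (0:ℝ) < 2 * |b| + |c| + 1 := by positivity
  set ε := min 1 ((-a) / (2 * |b| + |c| + 1)) with hε
  have hεpos : 0 < ε := lt_min one_pos (div_pos (by linarith) hd)
  have h1 := h ε hεpos
  have hε1 : ε ≤ 1 := min_le_left _ _
  have hε2 : ε ≤ (-a) / (2 * |b| + |c| + 1) := min_le_right _ _
  have hε3 : ε * (2 * |b| + |c| + 1) ≤ -a := by
    rw [← le_div_iff₀ hd]
    exact hε2
  have e1 : 2 * (ε * b) ≤ 2 * (ε * |b|) := by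
    have := mul_le_mul_of_nonneg_left (le_abs_self b) (le_of_lt hεpos)
    linarith
  have e2 : ε ^ 2 * c ≤ ε * |c| := by
    have h4 : ε ^ 2 * c ≤ ε ^ 2 * |c| :=
      mul_le_mul_of_nonneg_left (le_abs_self c) (sq_nonneg ε)
    have h5 : ε ^ 2 * |c| ≤ ε * |c| := by
      have : ε ^ 2 ≤ ε := by nlinarith
      exact mul_le_mul_of_nonneg_right this (abs_nonneg c)
    linarith
  nlinarith

lemma quad_param_zero {b c ε : ℝ} (hε : 0 < ε)
    (h : ∀ δ : ℝ, |δ| < ε → 0 ≤ 2 * δ * b + δ ^ 2 * c) : b = 0 := by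
  by_contra hb
  have hbpos : 0 < |b| := abs_pos.mpr hb
  have hci : (0:ℝ) < |c| + 1 := by positivity
  set δ₀ := min (ε / 2) (|b| / (|c| + 1)) with hδ₀
  have hδpos : 0 < δ₀ := lt_min (by linarith) (by positivity)
  have hδε : |δ₀| < ε := by
    rw [abs_of_pos hδpos]
    calc δ₀ ≤ ε / 2 := min_le_left _ _
      _ < ε := by linarith
  have h₁ := h δ₀ hδε
  have h₂ := h (-δ₀) (by rwa [abs_neg])
  have hkey : 2 * δ₀ * |b| ≤ δ₀ ^ 2 * c := by
    rcases abs_cases b with ⟨hab, _⟩ | ⟨hab, _⟩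
    · rw [hab]
      nlinarith [h₂]
    · rw [hab]
      nlinarith [h₁]
  have hmin2 : δ₀ ≤ |b| / (|c| + 1) := min_le_right _ _
  have hdd : δ₀ * (|c| + 1) ≤ |b| := by
    rw [← le_div_iff₀ hci]
    exact hmin2
  have hcabs : δ₀ ^ 2 * c ≤ δ₀ ^ 2 * |c| :=
    mul_le_mul_of_nonneg_left (le_abs_self c) (sq_nonneg δ₀)
  nlinarith [mul_le_mul_of_nonneg_left hdd (le_of_lt hδpos), mul_pos hδpos hbpos]

end Stmt6Aux

/-- Let `q` be a quadratic form on the space `Sⁿ` of real symmetric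
`n × n` matrices, represented by the self-adjoint linear map `T` with respect to the trace
inner product (so `q(X) = ⟨X, T X⟩`), whose matrix is nonsingular and has exactly one
positive eigenvalue. Then `q` is `Sⁿ₊`-Lorentzian if and only if the quartic polynomial
`x ↦ q(xxᵀ)` is nonnegative on `ℝⁿ`. -/
theorem stmt6 {n : ℕ} (T : ↥(symMat n) →ₗ[ℝ] ↥(symMat n))
    (hsa : IsSelfAdjointTrace T) (hns : Function.Injective T)
    (heig : HasExactlyOnePosEig T) :
    IsLorentzianPSD T ↔ ∀ x : Fin n → ℝ, 0 ≤ qformS T (rankOneSym x) := by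
  classical
  obtain ⟨e₀, he₀⟩ := heig.1
  have hn : 0 < n := by
    rcases Nat.eq_zero_or_pos n with h0 | h
    · exfalso
      subst h0
      have he0 : e₀ = 0 := by
        apply Subtype.ext
        ext i j
        exact i.elim0
      rw [he0, Stmt6Aux.q_zero] at he₀
      exact absurd he₀ (lt_irrefl 0)
    · exact h
  constructor
  · -- Lorentzian → nonneg on rank ones
    intro hL x
    set R := rankOneSym x with hR
    set I1 : ↥(symMat n) := ⟨(1 : Matrix (Fin n) (Fin n) ℝ), Matrix.isSymm_one⟩ with hI1
    have hposdef : ∀ ε : ℝ, 0 < ε →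
        Matrix.PosDef ((R + ε • I1 : ↥(symMat n)) : Matrix (Fin n) (Fin n) ℝ) := by
      intro ε hε
      refine Matrix.PosDef.of_dotProduct_mulVec_pos ?_ ?_
      · exact Stmt6Aux.isSymm_isHermitian (R + ε • I1).2
      · intro v hv
        have hval : ((R + ε • I1 : ↥(symMat n)) : Matrix (Fin n) (Fin n) ℝ)
            = Matrix.vecMulVec x x + ε • (1 : Matrix (Fin n) (Fin n) ℝ) := rfl
        rw [star_trivial, hval, Matrix.add_mulVec, dotProduct_add]
        have hmv : Matrix.vecMulVec x x *ᵥ v = (x ⬝ᵥ v) • x := by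
          ext i
          simp only [Matrix.mulVec, Matrix.vecMulVec_apply, dotProduct, Pi.smul_apply,
            smul_eq_mul]
          rw [Finset.sum_mul]
          exact Finset.sum_congr rfl fun j _ => by ring
        have h1 : v ⬝ᵥ (Matrix.vecMulVec x x *ᵥ v) = (x ⬝ᵥ v) * (v ⬝ᵥ x) := by
          rw [hmv, dotProduct_smul]
          rfl
        have h2 : v ⬝ᵥ ((ε • (1 : Matrix (Fin n) (Fin n) ℝ)) *ᵥ v) = ε * (v ⬝ᵥ v) := by
          rw [Matrix.smul_mulVec, dotProduct_smul, Matrix.one_mulVec]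
          rfl
        rw [h1, h2]
        have hvv := Stmt6Aux.dotProduct_self_pos hv
        have hcomm : v ⬝ᵥ x = x ⬝ᵥ v := dotProduct_comm v x
        rw [hcomm]
        nlinarith [mul_self_nonneg (x ⬝ᵥ v)]
    have key : ∀ ε : ℝ, 0 < ε →
        0 < qformS T R + 2 * (ε * Stmt6Aux.Bf T R I1) + ε ^ 2 * qformS T I1 := by
      intro ε hε
      have hmem := Stmt6Aux.posdef_mem_interior hn _ (hposdef ε hε)
      have hq2 : (0:ℝ) < qformS T (R + ε • I1) := hL.2 _ hmem _ hmem
      rw [Stmt6Aux.q_add hsa, Stmt6Aux.Bf_smul_right, Stmt6Aux.q_smul] at hq2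
      linarith
    exact Stmt6Aux.eps_limit key
  · -- nonneg on rank ones → Lorentzian
    intro hq
    obtain ⟨e, he, heR⟩ : ∃ e : ↥(symMat n), 0 < qformS T e ∧
        ∀ x : Fin n → ℝ, 0 ≤ Stmt6Aux.Bf T e (rankOneSym x) := by
      rcases Stmt6Aux.rankone_dichotomy hsa heig he₀ hns hq with hp | hm
      · exact ⟨e₀, he₀, hp⟩
      · refine ⟨-e₀, ?_, ?_⟩
        · have hne : (-e₀ : ↥(symMat n)) = (-1 : ℝ) • e₀ := by module
          rw [hne, Stmt6Aux.q_smul]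
          simpa using he₀
        · intro x
          have hne : (-e₀ : ↥(symMat n)) = (-1 : ℝ) • e₀ := by module
          rw [hne, Stmt6Aux.Bf_smul_left]
          have := hm x
          linarith
    have hpsdN : ∀ Z : ↥(symMat n), Matrix.PosSemidef (Z : Matrix (Fin n) (Fin n) ℝ) →
        0 ≤ qformS T Z ∧ 0 ≤ Stmt6Aux.Bf T e Z := by
      intro Z hZ
      obtain ⟨v, hv⟩ := Stmt6Aux.psd_sum (T := T) Z hZ
      rw [hv]
      exact Stmt6Aux.nappe_sum hsa heig he Finset.univ _ fun i _ => ⟨hq (v i), heR (v i)⟩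
    have hqpos : ∀ X : ↥(symMat n), Matrix.PosDef (X : Matrix (Fin n) (Fin n) ℝ) →
        0 < qformS T X := by
      intro X hX
      rcases (hpsdN X hX.posSemidef).1.lt_or_eq with h | h
      · exact h
      exfalso
      have hBzero : ∀ Z : ↥(symMat n), Stmt6Aux.Bf T Z X = 0 := by
        intro Z
        have hb : Stmt6Aux.Bf T X Z = 0 := by
          have hmemI := Stmt6Aux.posdef_mem_interior hn X hX
          have hcont : Continuous (fun δ : ℝ => X + δ • Z) :=
            continuous_const.add (continuous_id.smul continuous_const)
          have hev : ∀ᶠ δ in nhds (0:ℝ), (X + δ • Z) ∈ interior (PSDcone n) := by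
            have hca := hcont.continuousAt (x := (0:ℝ))
            rw [ContinuousAt] at hca
            simp only [zero_smul, add_zero] at hca
            exact hca (isOpen_interior.mem_nhds hmemI)
          obtain ⟨ε, hε, hball⟩ := Metric.eventually_nhds_iff.mp hev
          apply Stmt6Aux.quad_param_zero hε
          intro δ hδ
          have hmem : (X + δ • Z) ∈ PSDcone n := by
            refine interior_subset (hball ?_)
            rw [Real.dist_eq, sub_zero]
            exact hδ
          have h2 := (hpsdN _ hmem).1
          rw [Stmt6Aux.q_add hsa, Stmt6Aux.q_smul, Stmt6Aux.Bf_smul_right, ← h] at h2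
          linarith
        rw [Stmt6Aux.Bf_symm hsa Z X]
        exact hb
      have hX0 : X = 0 := Stmt6Aux.Bf_nondeg hns X hBzero
      have hv : (Pi.single (⟨0, hn⟩ : Fin n) 1 : Fin n → ℝ) ≠ 0 := by
        intro hc
        have := congrFun hc ⟨0, hn⟩
        simp [Pi.single_apply] at this
      have hpos := hX.dotProduct_mulVec_pos hv
      rw [hX0] at hpos
      simp at hpos
    refine ⟨heig, fun X hX Y hY => ?_⟩
    have hXp := Stmt6Aux.interior_posdef X hX
    have hYp := Stmt6Aux.interior_posdef Y hY
    have hNX := hpsdN X hXp.posSemidef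
    have hNY := hpsdN Y hYp.posSemidef
    exact (Stmt6Aux.nappe_bf_nonneg hsa heig he Y X hNY.1 hNX.1 hNY.2 hNX.2).2
      ⟨hqpos Y hYp, hqpos X hXp⟩
end
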